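/- Let q be a planar link state on {1,...,n} with t ≥ 1 defects. Then there exists a planar link state p on {1,...,n} with t defects such that the multigraph on vertex set {1,...,n} whose edges are the connections of q together with the connections of p is acyclic (a disjoint union of paths), and every connected component contains exactly one defect of q and exactly one defect of p. -/

import Mathlib

open scoped Classical
set_option maxHeartbeats 4000000

/-- A Temperley–Lieb (planar) link state on `{0,…,n-1}`, recorded by its set of
connections (2-element parts); all other vertices are defects.  Planarity: whenever
`i < j` are connected, the interval `[i,j]` is a union of parts and contains no defects. -/
structure LinkState (n : ℕ) where
  pairs : Finset (Finset (Fin n))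
  card_two : ∀ s ∈ pairs, s.card = 2
  disj : ∀ s ∈ pairs, ∀ t ∈ pairs, s ≠ t → Disjoint s t
  planar : ∀ s ∈ pairs, ∀ i ∈ s, ∀ j ∈ s, i < j →
    ∀ k : Fin n, i ≤ k → k ≤ j → ∃ t ∈ pairs, k ∈ t ∧ ∀ l ∈ t, i ≤ l ∧ l ≤ j

/-- The defects of a link state: vertices lying in no connection. -/
noncomputable def LinkState.defects {n : ℕ} (q : LinkState n) : Finset (Fin n) :=
  Finset.univ.filter (fun i => ∀ s ∈ q.pairs, i ∉ s)

namespace Stmt10Aux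

variable {n : ℕ}

abbrev Pairs (n : ℕ) := Finset (Finset (Fin n))

/-- A (planar) partial matching supported on a vertex subset `V`. -/
structure IsPM (V : Finset (Fin n)) (P : Pairs n) : Prop where
  card_two : ∀ s ∈ P, s.card = 2
  disj : ∀ s ∈ P, ∀ t ∈ P, s ≠ t → Disjoint s t
  sub : ∀ s ∈ P, ∀ i ∈ s, i ∈ V
  planar : ∀ s ∈ P, ∀ i ∈ s, ∀ j ∈ s, i < j →
    ∀ k ∈ V, i ≤ k → k ≤ j → ∃ t ∈ P, k ∈ t ∧ ∀ l ∈ t, i ≤ l ∧ l ≤ j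

noncomputable def pdef (V : Finset (Fin n)) (P : Pairs n) : Finset (Fin n) :=
  V.filter (fun i => ∀ s ∈ P, i ∉ s)

lemma mem_pdef {V : Finset (Fin n)} {P : Pairs n} {i : Fin n} :
    i ∈ pdef V P ↔ i ∈ V ∧ ∀ s ∈ P, i ∉ s := Finset.mem_filter

def pgraph (A B : Pairs n) : SimpleGraph (Fin n) :=
  SimpleGraph.fromRel (fun i j => ∃ s ∈ A ∪ B, i ∈ s ∧ j ∈ s)

lemma pgraph_adj {A B : Pairs n} {i j : Fin n} :
    (pgraph A B).Adj i j ↔ i ≠ j ∧ ∃ s, (s ∈ A ∪ B) ∧ i ∈ s ∧ j ∈ s := by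
  rw [pgraph, SimpleGraph.fromRel_adj]
  constructor
  · rintro ⟨hne, h | h⟩
    · exact ⟨hne, by tauto⟩
    · obtain ⟨s, hs, h1, h2⟩ := h; exact ⟨hne, s, hs, h2, h1⟩
  · rintro ⟨hne, h⟩; exact ⟨hne, Or.inl (by tauto)⟩

lemma adj_of_pair {A B : Pairs n} {s : Finset (Fin n)} (hs : s ∈ A ∪ B) {x y : Fin n}
    (hx : x ∈ s) (hy : y ∈ s) (hxy : x ≠ y) : (pgraph A B).Adj x y :=
  pgraph_adj.mpr ⟨hxy, s, hs, hx, hy⟩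

/-- The homogeneous component/properties record for one side. -/
def Half (V : Finset (Fin n)) (A : Pairs n) (G : SimpleGraph (Fin n)) (f : Fin n → Fin n) : Prop :=
  (∀ d ∈ pdef V A, f d = d) ∧ (∀ i ∈ V, f i ∈ pdef V A) ∧
  (∀ i j, G.Adj i j → f i = f j) ∧ (∀ i ∈ V, G.Reachable i (f i))

def Good (V : Finset (Fin n)) (Q P : Pairs n) : Prop :=
  IsPM V P ∧ (pdef V P).card = (pdef V Q).card ∧ Disjoint Q P ∧
  (∃ f, Half V Q (pgraph Q P) f) ∧ (∃ g, Half V P (pgraph Q P) g)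

/-! ### Basic pair lemmas -/

lemma pair_eq {s : Finset (Fin n)} (h2 : s.card = 2) {x y : Fin n} (hx : x ∈ s) (hy : y ∈ s)
    (hxy : x ≠ y) : s = {x, y} := by
  refine (Finset.eq_of_subset_of_card_le ?_ ?_).symm
  · intro z hz
    rcases Finset.mem_insert.mp hz with rfl | hz
    · exact hx
    · rw [Finset.mem_singleton] at hz; subst hz; exact hy
  · rw [h2, Finset.card_pair hxy]

lemma mem_pair_other {s : Finset (Fin n)} (h2 : s.card = 2) {x : Fin n} (hx : x ∈ s) :
    ∃ y, y ≠ x ∧ s = {x, y} := by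
  obtain ⟨a, b, hab, rfl⟩ := Finset.card_eq_two.mp h2
  rcases Finset.mem_insert.mp hx with rfl | hx
  · exact ⟨b, hab.symm, rfl⟩
  · rw [Finset.mem_singleton] at hx; subst hx
    exact ⟨a, hab, by rw [Finset.pair_comm]⟩

lemma other_eq {s : Finset (Fin n)} (h2 : s.card = 2) {x y y' : Fin n} (hx : x ∈ s) (hy : y ∈ s)
    (hy' : y' ∈ s) (h1 : y ≠ x) (h1' : y' ≠ x) : y = y' := by
  obtain ⟨w, hwx, rfl⟩ := mem_pair_other h2 hx
  simp only [Finset.mem_insert, Finset.mem_singleton] at hy hy'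
  rcases hy with rfl | rfl
  · exact absurd rfl h1
  · rcases hy' with rfl | rfl
    · exact absurd rfl h1'
    · rfl

lemma same_pair_eq {A : Pairs n} (hd : ∀ s ∈ A, ∀ t ∈ A, s ≠ t → Disjoint s t)
    {s t : Finset (Fin n)} (hs : s ∈ A) (ht : t ∈ A) {x : Fin n} (hxs : x ∈ s) (hxt : x ∈ t) :
    s = t := by
  by_contra h
  exact (Finset.disjoint_left.mp (hd s hs t ht h)) hxs hxt

lemma pair_lt_resolve {s : Finset (Fin n)} {x y i j : Fin n} (hs : s = {x, y}) (hxy : x < y)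
    (hi : i ∈ s) (hj : j ∈ s) (hij : i < j) : i = x ∧ j = y := by
  subst hs
  simp only [Finset.mem_insert, Finset.mem_singleton] at hi hj
  rcases hi with rfl | rfl <;> rcases hj with rfl | rfl
  · exact absurd hij (lt_irrefl _)
  · exact ⟨rfl, rfl⟩
  · exact absurd (hij.trans hxy) (lt_irrefl _)
  · exact absurd hij (lt_irrefl _)

/-! ### Graph lemmas -/

lemma pgraph_comm (A B : Pairs n) : pgraph A B = pgraph B A := by
  unfold pgraph
  rw [Finset.union_comm]

lemma pgraph_mono {A B A' B' : Pairs n} (hA : A ⊆ A') (hB : B ⊆ B') :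
    pgraph A B ≤ pgraph A' B' := by
  intro x y hxy
  rw [pgraph_adj] at hxy ⊢
  obtain ⟨hne, s, hs, hx, hy⟩ := hxy
  refine ⟨hne, s, ?_, hx, hy⟩
  rcases Finset.mem_union.mp hs with h | h
  · exact Finset.mem_union_left _ (hA h)
  · exact Finset.mem_union_right _ (hB h)

lemma reach_of_adj_reach {G H : SimpleGraph (Fin n)} (h : ∀ x y, G.Adj x y → H.Reachable x y)
    {u v : Fin n} (r : G.Reachable u v) : H.Reachable u v := by
  obtain ⟨w⟩ := r
  induction w with
  | nil => exact SimpleGraph.Reachable.refl _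
  | cons hadj _ ih => exact (h _ _ hadj).trans ih

lemma const_of_reach {G : SimpleGraph (Fin n)} {f : Fin n → Fin n}
    (hf : ∀ x y, G.Adj x y → f x = f y) {u v : Fin n} (r : G.Reachable u v) : f u = f v := by
  obtain ⟨w⟩ := r
  induction w with
  | nil => rfl
  | cons hadj _ ih => exact (hf _ _ hadj).trans ih

/-! ### Degree lemmas -/

lemma nbrs {Q P : Pairs n}
    (hQ2 : ∀ s ∈ Q, s.card = 2) (hQd : ∀ s ∈ Q, ∀ t ∈ Q, s ≠ t → Disjoint s t)
    (hP2 : ∀ s ∈ P, s.card = 2) (hPd : ∀ s ∈ P, ∀ t ∈ P, s ≠ t → Disjoint s t)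
    {x y₁ y₂ y₃ : Fin n} (h₁ : (pgraph Q P).Adj x y₁) (h₂ : (pgraph Q P).Adj x y₂)
    (h₃ : (pgraph Q P).Adj x y₃) : y₁ = y₂ ∨ y₁ = y₃ ∨ y₂ = y₃ := by
  obtain ⟨hne₁, s₁, hs₁, hx₁, hy₁⟩ := pgraph_adj.mp h₁
  obtain ⟨hne₂, s₂, hs₂, hx₂, hy₂⟩ := pgraph_adj.mp h₂
  obtain ⟨hne₃, s₃, hs₃, hx₃, hy₃⟩ := pgraph_adj.mp h₃
  have key : ∀ (A : Pairs n), (∀ s ∈ A, s.card = 2) → (∀ s ∈ A, ∀ t ∈ A, s ≠ t → Disjoint s t) →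
      ∀ {s t : Finset (Fin n)} {u w : Fin n}, s ∈ A → t ∈ A → x ∈ s → u ∈ s → x ∈ t → w ∈ t →
      u ≠ x → w ≠ x → u = w := by
    intro A hA2 hAd s t u w hs ht hxs hus hxt hwt hux hwx
    have := same_pair_eq hAd hs ht hxs hxt
    subst this
    exact other_eq (hA2 _ hs) hxs hus hwt hux hwx
  rcases Finset.mem_union.mp hs₁ with h1 | h1 <;> rcases Finset.mem_union.mp hs₂ with h2 | h2 <;>
    rcases Finset.mem_union.mp hs₃ with h3 | h3
  · exact Or.inl (key Q hQ2 hQd h1 h2 hx₁ hy₁ hx₂ hy₂ hne₁.symm hne₂.symm)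
  · exact Or.inl (key Q hQ2 hQd h1 h2 hx₁ hy₁ hx₂ hy₂ hne₁.symm hne₂.symm)
  · exact Or.inr (Or.inl (key Q hQ2 hQd h1 h3 hx₁ hy₁ hx₃ hy₃ hne₁.symm hne₃.symm))
  · exact Or.inr (Or.inr (key P hP2 hPd h2 h3 hx₂ hy₂ hx₃ hy₃ hne₂.symm hne₃.symm))
  · exact Or.inr (Or.inr (key Q hQ2 hQd h2 h3 hx₂ hy₂ hx₃ hy₃ hne₂.symm hne₃.symm))
  · exact Or.inr (Or.inl (key P hP2 hPd h1 h3 hx₁ hy₁ hx₃ hy₃ hne₁.symm hne₃.symm))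
  · exact Or.inl (key P hP2 hPd h1 h2 hx₁ hy₁ hx₂ hy₂ hne₁.symm hne₂.symm)
  · exact Or.inl (key P hP2 hPd h1 h2 hx₁ hy₁ hx₂ hy₂ hne₁.symm hne₂.symm)

lemma defect_nbr {Q P : Pairs n}
    (hP2 : ∀ s ∈ P, s.card = 2) (hPd : ∀ s ∈ P, ∀ t ∈ P, s ≠ t → Disjoint s t)
    {d : Fin n} (hd : ∀ s ∈ Q, d ∉ s) {y₁ y₂ : Fin n}
    (h₁ : (pgraph Q P).Adj d y₁) (h₂ : (pgraph Q P).Adj d y₂) : y₁ = y₂ := by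
  obtain ⟨hne₁, s₁, hs₁, hx₁, hy₁⟩ := pgraph_adj.mp h₁
  obtain ⟨hne₂, s₂, hs₂, hx₂, hy₂⟩ := pgraph_adj.mp h₂
  have h1 : s₁ ∈ P := by
    rcases Finset.mem_union.mp hs₁ with h | h
    · exact absurd hx₁ (hd _ h)
    · exact h
  have h2 : s₂ ∈ P := by
    rcases Finset.mem_union.mp hs₂ with h | h
    · exact absurd hx₂ (hd _ h)
    · exact h
  have := same_pair_eq hPd h1 h2 hx₁ hx₂
  subst this
  exact other_eq (hP2 _ h1) hx₁ hy₁ hy₂ hne₁.symm hne₂.symm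

/-! ### Cycle lemmas -/

open SimpleGraph

lemma cycle_two_nbrs {α : Type*} {G : SimpleGraph α} {v x : α} {c : G.Walk v v}
    (hc : c.IsCycle) (hx : x ∈ c.support) :
    ∃ y₁ y₂, y₁ ≠ y₂ ∧ G.Adj x y₁ ∧ G.Adj x y₂ ∧ y₁ ∈ c.support ∧ y₂ ∈ c.support := by
  set c' := c.rotate x hx with hc'def
  have hc' : c'.IsCycle := hc.rotate hx
  have hsupp : ∀ w, w ∈ c'.support → w ∈ c.support := by
    intro w hw
    rw [Walk.mem_support_iff] at hw
    rcases hw with rfl | hw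
    · exact hx
    · rw [Walk.mem_support_iff]
      exact Or.inr ((Walk.support_rotate c x hx).mem_iff.mp hw)
  obtain ⟨y₁, hadj₁, q, hq⟩ := Walk.not_nil_iff.mp hc'.not_nil
  have hlen : 3 ≤ c'.length := hc'.three_le_length
  have hqlen : 2 ≤ q.length := by
    have : c'.length = q.length + 1 := by rw [hq]; simp
    omega
  have hqrev : ¬ q.reverse.Nil := by
    rw [Walk.not_nil_iff_lt_length, Walk.length_reverse]; omega
  obtain ⟨y₂, hadj₂, r, hr⟩ := Walk.not_nil_iff.mp hqrev
  have hy₂q : y₂ ∈ q.support := by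
    have h1 : y₂ ∈ q.reverse.support := by
      rw [hr]; simp [Walk.support_cons]
    rwa [Walk.support_reverse, List.mem_reverse] at h1
  have hedge₂ : s(x, y₂) ∈ q.edges := by
    have h1 : s(x, y₂) ∈ q.reverse.edges := by rw [hr]; simp
    rwa [Walk.edges_reverse, List.mem_reverse] at h1
  have hne : y₁ ≠ y₂ := by
    intro h
    subst h
    have hnd : c'.edges.Nodup := hc'.edges_nodup
    rw [hq, Walk.edges_cons] at hnd
    exact (List.nodup_cons.mp hnd).1 hedge₂
  refine ⟨y₁, y₂, hne, hadj₁, hadj₂, ?_, ?_⟩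
  · apply hsupp
    rw [hq, Walk.support_cons]
    exact List.mem_cons_of_mem _ q.start_mem_support
  · apply hsupp
    rw [hq, Walk.support_cons]
    exact List.mem_cons_of_mem _ hy₂q

lemma acyclic_of_half {V : Finset (Fin n)} {Q P : Pairs n}
    (hQ2 : ∀ s ∈ Q, s.card = 2) (hQd : ∀ s ∈ Q, ∀ t ∈ Q, s ≠ t → Disjoint s t)
    (hQs : ∀ s ∈ Q, ∀ i ∈ s, i ∈ V)
    (hP2 : ∀ s ∈ P, s.card = 2) (hPd : ∀ s ∈ P, ∀ t ∈ P, s ≠ t → Disjoint s t)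
    (hPs : ∀ s ∈ P, ∀ i ∈ s, i ∈ V)
    {f : Fin n → Fin n} (hf : Half V Q (pgraph Q P) f) : (pgraph Q P).IsAcyclic := by
  intro v c hc
  have hclosed : ∀ x ∈ c.support, ∀ y, (pgraph Q P).Adj x y → y ∈ c.support := by
    intro x hx y hy
    obtain ⟨y₁, y₂, h12, ha1, ha2, hs1, hs2⟩ := cycle_two_nbrs hc hx
    rcases nbrs hQ2 hQd hP2 hPd hy ha1 ha2 with rfl | rfl | h
    · exact hs1
    · exact hs2
    · exact absurd h h12
  have hcontain : ∀ (x y : Fin n) (w : (pgraph Q P).Walk x y), x ∈ c.support → y ∈ c.support := by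
    intro x y w
    induction w with
    | nil => exact id
    | cons hadj _ ih => intro hx; exact ih (hclosed _ hx _ hadj)
  have hv : v ∈ c.support := c.start_mem_support
  have hvV : v ∈ V := by
    obtain ⟨y₁, _, _, ha1, _, _, _⟩ := cycle_two_nbrs hc hv
    obtain ⟨_, s, hs, hvs, _⟩ := pgraph_adj.mp ha1
    rcases Finset.mem_union.mp hs with h | h
    · exact hQs _ h _ hvs
    · exact hPs _ h _ hvs
  have hdQ : f v ∈ pdef V Q := hf.2.1 v hvV
  obtain ⟨w⟩ := hf.2.2.2 v hvV
  have hdc : f v ∈ c.support := hcontain _ _ w hv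
  obtain ⟨y₁, y₂, h12, ha1, ha2, _, _⟩ := cycle_two_nbrs hc hdc
  exact h12 (defect_nbr hP2 hPd (mem_pdef.mp hdQ).2 ha1 ha2)


noncomputable def mspan (s : Finset (Fin n)) : ℕ :=
  s.sup (fun x => (x : ℕ)) + s.sup (fun x => n - 1 - (x : ℕ))

lemma exists_gap_pair {V : Finset (Fin n)} {Q : Pairs n} (hQ : IsPM V Q) (hne : Q.Nonempty) :
    ∃ a b : Fin n, a < b ∧ ({a, b} : Finset (Fin n)) ∈ Q ∧ ∀ x ∈ V, ¬(a < x ∧ x < b) := by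
  obtain ⟨s, hsQ, hmin⟩ := Finset.exists_min_image Q mspan hne
  obtain ⟨a, b, hab, rfl⟩ := Finset.card_eq_two.mp (hQ.card_two s hsQ)
  have main : ∀ a b : Fin n, a < b → ({a, b} : Finset (Fin n)) ∈ Q →
      (∀ t ∈ Q, mspan {a, b} ≤ mspan t) →
      ∃ a' b' : Fin n, a' < b' ∧ ({a', b'} : Finset (Fin n)) ∈ Q ∧
        ∀ x ∈ V, ¬(a' < x ∧ x < b') := by
    intro a b hab hsQ hmin
    refine ⟨a, b, hab, hsQ, ?_⟩
    rintro x hxV ⟨hax, hxb⟩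
    obtain ⟨t, htQ, hxt, hbd⟩ := hQ.planar _ hsQ a (by simp) b (by simp) hab x hxV hax.le hxb.le
    have hts : t ≠ ({a, b} : Finset (Fin n)) := by
      rintro rfl
      rcases Finset.mem_insert.mp hxt with rfl | hx
      · exact absurd hax (lt_irrefl _)
      · rw [Finset.mem_singleton] at hx; subst hx; exact absurd hxb (lt_irrefl _)
    have hdisj := hQ.disj t htQ _ hsQ hts
    have hamem : a ∈ ({a, b} : Finset (Fin n)) := Finset.mem_insert_self _ _
    have hbmem : b ∈ ({a, b} : Finset (Fin n)) := by
      refine Finset.mem_insert_of_mem ?_; exact Finset.mem_singleton_self _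
    have hat : a ∉ t := fun h => (Finset.disjoint_left.mp hdisj) h hamem
    have hbt : b ∉ t := fun h => (Finset.disjoint_left.mp hdisj) h hbmem
    have hsup1 : t.sup (fun x => (x : ℕ)) ≤ (b : ℕ) - 1 := by
      refine Finset.sup_le fun y hy => ?_
      have h1 : (y : ℕ) ≤ (b : ℕ) := (hbd y hy).2
      have h2 : y ≠ b := fun h => hbt (h ▸ hy)
      have h3 : (y : ℕ) ≠ (b : ℕ) := fun h => h2 (Fin.ext h)
      omega
    have hsup2 : t.sup (fun x => n - 1 - (x : ℕ)) ≤ n - 1 - ((a : ℕ) + 1) := by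
      refine Finset.sup_le fun y hy => ?_
      have h1 : (a : ℕ) ≤ (y : ℕ) := (hbd y hy).1
      have h2 : y ≠ a := fun h => hat (h ▸ hy)
      have h3 : (y : ℕ) ≠ (a : ℕ) := fun h => h2 (Fin.ext h)
      omega
    have hle1 : (b : ℕ) ≤ ({a, b} : Finset (Fin n)).sup (fun x => (x : ℕ)) :=
      Finset.le_sup (f := fun x : Fin n => (x : ℕ)) hbmem
    have hle2 : n - 1 - (a : ℕ) ≤ ({a, b} : Finset (Fin n)).sup (fun x => n - 1 - (x : ℕ)) :=
      Finset.le_sup (f := fun x : Fin n => n - 1 - (x : ℕ)) hamem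
    have hmt := hmin _ htQ
    rw [mspan, mspan] at hmt
    have hbn : (b : ℕ) < n := b.isLt
    have habv : (a : ℕ) < (b : ℕ) := hab
    have haxv : (a : ℕ) < (x : ℕ) := hax
    have hxbv : (x : ℕ) < (b : ℕ) := hxb
    omega
  rcases lt_or_gt_of_ne hab with h | h
  · exact main a b h hsQ hmin
  · rw [Finset.pair_comm] at hsQ hmin
    exact main b a h hsQ hmin
lemma restrict_IsPM {V : Finset (Fin n)} {Q : Pairs n} (hQ : IsPM V Q) {a b : Fin n}
    (hs : ({a, b} : Finset (Fin n)) ∈ Q) :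
    IsPM ((V.erase a).erase b) (Q.erase {a, b}) := by
  have hmem : ∀ x, x ∈ (V.erase a).erase b ↔ x ∈ V ∧ x ≠ a ∧ x ≠ b := by
    intro x; simp [Finset.mem_erase]; tauto
  have hnotin : ∀ s ∈ Q.erase ({a, b} : Finset (Fin n)), a ∉ s ∧ b ∉ s := by
    intro s hs'
    obtain ⟨hne, hsQ⟩ := Finset.mem_erase.mp hs'
    have := hQ.disj s hsQ _ hs hne
    exact ⟨fun h => Finset.disjoint_left.mp this h (by simp),
           fun h => Finset.disjoint_left.mp this h (by simp)⟩
  constructor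
  · exact fun s hs' => hQ.card_two s (Finset.mem_of_mem_erase hs')
  · exact fun s hs' t ht' hne =>
      hQ.disj s (Finset.mem_of_mem_erase hs') t (Finset.mem_of_mem_erase ht') hne
  · intro s hs' i hi
    rw [hmem]
    refine ⟨hQ.sub s (Finset.mem_of_mem_erase hs') i hi, ?_, ?_⟩
    · rintro rfl; exact (hnotin s hs').1 hi
    · rintro rfl; exact (hnotin s hs').2 hi
  · intro s hs' i hi j hj hij k hk hik hkj
    obtain ⟨hkV, hka, hkb⟩ := (hmem k).mp hk
    obtain ⟨t, htQ, hkt, hbd⟩ :=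
      hQ.planar s (Finset.mem_of_mem_erase hs') i hi j hj hij k hkV hik hkj
    have htne : t ≠ ({a, b} : Finset (Fin n)) := by
      rintro rfl
      rcases Finset.mem_insert.mp hkt with rfl | h
      · exact hka rfl
      · rw [Finset.mem_singleton] at h; exact hkb h
    exact ⟨t, Finset.mem_erase.mpr ⟨htne, htQ⟩, hkt, hbd⟩

lemma pdef_erase_eq {V : Finset (Fin n)} {Q : Pairs n} {a b : Fin n}
    (hs : ({a, b} : Finset (Fin n)) ∈ Q) :
    pdef V Q = pdef ((V.erase a).erase b) (Q.erase {a, b}) := by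
  ext x
  rw [mem_pdef, mem_pdef]
  constructor
  · rintro ⟨hxV, hunc⟩
    have hxa : x ≠ a := by rintro rfl; exact hunc _ hs (Finset.mem_insert_self _ _)
    have hxb : x ≠ b := by
      rintro rfl
      exact hunc _ hs (Finset.mem_insert_of_mem (Finset.mem_singleton_self _))
    exact ⟨Finset.mem_erase.mpr ⟨hxb, Finset.mem_erase.mpr ⟨hxa, hxV⟩⟩,
      fun s hs' => hunc s (Finset.mem_of_mem_erase hs')⟩
  · rintro ⟨hxV'', hunc⟩
    obtain ⟨hxb, hxV'⟩ := Finset.mem_erase.mp hxV''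
    obtain ⟨hxa, hxV⟩ := Finset.mem_erase.mp hxV'
    refine ⟨hxV, fun s hs' => ?_⟩
    by_cases h : s = ({a, b} : Finset (Fin n))
    · subst h
      simp only [Finset.mem_insert, Finset.mem_singleton]
      tauto
    · exact hunc s (Finset.mem_erase.mpr ⟨h, hs'⟩)

lemma splice_L_defect (V V' : Finset (Fin n)) (Q' P' : Pairs n) (a b c : Fin n)
    (hab : a < b) (hca : c < a)
    (hV : ∀ x, x ∈ V ↔ x = a ∨ x = b ∨ x ∈ V') (ha' : a ∉ V') (hb' : b ∉ V') (hcV : c ∈ V')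
    (hgap : ∀ x ∈ V, ¬(a < x ∧ x < b))
    (hcmax : ∀ x ∈ V, x < a → x ≤ c)
    (hP' : IsPM V' P') (hQ'sub : ∀ s ∈ Q', ∀ i ∈ s, i ∈ V')
    (hdisj : Disjoint Q' P')
    (hcard : (pdef V' P').card = (pdef V' Q').card)
    (hcdef : c ∈ pdef V' P')
    (f' g' : Fin n → Fin n)
    (hf' : Half V' Q' (pgraph Q' P') f') (hg' : Half V' P' (pgraph Q' P') g') :
    Good V (insert {a, b} Q') (insert {c, a} P') := by
  have hcb : c < b := hca.trans hab
  have hane : a ≠ b := ne_of_lt hab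
  have hcane : c ≠ a := ne_of_lt hca
  have hcbne : c ≠ b := ne_of_lt hcb
  have haV : a ∈ V := (hV a).mpr (Or.inl rfl)
  have hbV : b ∈ V := (hV b).mpr (Or.inr (Or.inl rfl))
  have hsubV : ∀ x ∈ V', x ∈ V := fun x hx => (hV x).mpr (Or.inr (Or.inr hx))
  have hcVV : c ∈ V := hsubV c hcV
  have hne_a : ∀ x ∈ V', x ≠ a := fun x hx h => ha' (h ▸ hx)
  have hne_b : ∀ x ∈ V', x ≠ b := fun x hx h => hb' (h ▸ hx)
  have hV'lt : ∀ x ∈ V', x < a ∨ b < x := by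
    intro x hx
    rcases lt_trichotomy x a with h | h | h
    · exact Or.inl h
    · exact absurd h (hne_a x hx)
    · right
      rcases lt_trichotomy x b with h2 | h2 | h2
      · exact absurd ⟨h, h2⟩ (hgap x (hsubV x hx))
      · exact absurd h2 (hne_b x hx)
      · exact h2
  have hcdef2 := (mem_pdef.mp hcdef).2
  have hnospan : ∀ s ∈ P', ∀ i ∈ s, ∀ j ∈ s, i < j → ∀ k : Fin n,
      (k = a ∨ k = b) → i ≤ k → k ≤ j → False := by
    intro s hs i hi j hj hij k hk hik hkj
    have hiV' : i ∈ V' := hP'.sub s hs i hi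
    have hjV' : j ∈ V' := hP'.sub s hs j hj
    have hka : a ≤ k := by
      rcases hk with rfl | rfl
      · exact le_refl _
      · exact hab.le
    have hkb : k ≤ b := by
      rcases hk with rfl | rfl
      · exact hab.le
      · exact le_refl _
    have hia : i < a := by
      rcases hV'lt i hiV' with h | h
      · exact h
      · exact absurd (le_trans hik hkb) (not_le_of_gt h)
    have hbj : b < j := by
      rcases hV'lt j hjV' with h | h
      · exact absurd (le_trans hka hkj) (not_le_of_gt h)
      · exact h
    have hic : i ≤ c := hcmax i (hsubV i hiV') hia
    obtain ⟨t, ht, hct, _⟩ :=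
      hP'.planar s hs i hi j hj hij c hcV hic (le_of_lt (hca.trans (lt_of_lt_of_le hab hbj.le)))
    exact hcdef2 t ht hct
  have hPM : IsPM V (insert {c, a} P') := by
    have hdisjca : ∀ t ∈ P', Disjoint ({c, a} : Finset (Fin n)) t := by
      intro t ht
      rw [Finset.disjoint_left]
      intro x hx hxt
      rcases Finset.mem_insert.mp hx with rfl | hx
      · exact hcdef2 t ht hxt
      · rw [Finset.mem_singleton] at hx; subst hx; exact ha' (hP'.sub t ht _ hxt)
    constructor
    · intro s hs
      rcases Finset.mem_insert.mp hs with rfl | hs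
      · exact Finset.card_pair hcane
      · exact hP'.card_two s hs
    · intro s hs t ht hst
      rcases Finset.mem_insert.mp hs with rfl | hs <;> rcases Finset.mem_insert.mp ht with rfl | ht
      · exact absurd rfl hst
      · exact hdisjca t ht
      · exact (hdisjca s hs).symm
      · exact hP'.disj s hs t ht hst
    · intro s hs i hi
      rcases Finset.mem_insert.mp hs with rfl | hs
      · rcases Finset.mem_insert.mp hi with rfl | hi
        · exact hcVV
        · rw [Finset.mem_singleton] at hi; subst hi; exact haV
      · exact hsubV i (hP'.sub s hs i hi)
    · intro s hs i hi j hj hij k hkV hik hkj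
      rcases Finset.mem_insert.mp hs with rfl | hs
      · have hres := pair_lt_resolve rfl hca hi hj hij
        rw [hres.1] at hik
        rw [hres.2] at hkj
        rw [hres.1, hres.2]
        refine ⟨{c, a}, Finset.mem_insert_self _ _, ?_, ?_⟩
        · rcases (hV k).mp hkV with h | h | hk
          · rw [h]; exact Finset.mem_insert_of_mem (Finset.mem_singleton_self _)
          · rw [h] at hkj; exact absurd hkj (not_le_of_gt hab)
          · have h1 : k < a := lt_of_le_of_ne hkj (hne_a k hk)
            have hkc : k = c := le_antisymm (hcmax k (hsubV k hk) h1) hik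
            rw [hkc]; exact Finset.mem_insert_self _ _
        · intro l hl
          rcases Finset.mem_insert.mp hl with rfl | hl
          · exact ⟨le_refl _, hca.le⟩
          · rw [Finset.mem_singleton] at hl; subst hl; exact ⟨hca.le, le_refl _⟩
      · rcases (hV k).mp hkV with h | h | hk
        · exact (hnospan s hs i hi j hj hij k (Or.inl h) hik hkj).elim
        · exact (hnospan s hs i hi j hj hij k (Or.inr h) hik hkj).elim
        · obtain ⟨t, ht, hkt, hbd⟩ := hP'.planar s hs i hi j hj hij k hk hik hkj
          exact ⟨t, Finset.mem_insert_of_mem ht, hkt, hbd⟩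
  have hpdefQ : pdef V (insert {a, b} Q') = pdef V' Q' := by
    ext x
    rw [mem_pdef, mem_pdef]
    constructor
    · rintro ⟨hxV, hunc⟩
      have hxa : x ≠ a := by rintro rfl; exact hunc _ (Finset.mem_insert_self _ _) (by simp)
      have hxb : x ≠ b := by rintro rfl; exact hunc _ (Finset.mem_insert_self _ _) (by simp)
      rcases (hV x).mp hxV with rfl | rfl | hx
      · exact absurd rfl hxa
      · exact absurd rfl hxb
      · exact ⟨hx, fun s hs => hunc s (Finset.mem_insert_of_mem hs)⟩
    · rintro ⟨hxV', hunc⟩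
      refine ⟨hsubV x hxV', fun s hs => ?_⟩
      rcases Finset.mem_insert.mp hs with rfl | hs
      · simp only [Finset.mem_insert, Finset.mem_singleton]
        push_neg
        exact ⟨hne_a x hxV', hne_b x hxV'⟩
      · exact hunc s hs
  have hpdefP : pdef V (insert {c, a} P') = insert b ((pdef V' P').erase c) := by
    ext x
    rw [mem_pdef]
    constructor
    · rintro ⟨hxV, hunc⟩
      have hxa : x ≠ a := by
        rintro rfl; exact hunc _ (Finset.mem_insert_self _ _) (by simp)
      have hxc : x ≠ c := by
        rintro rfl; exact hunc _ (Finset.mem_insert_self _ _) (by simp)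
      rcases (hV x).mp hxV with rfl | rfl | hx
      · exact absurd rfl hxa
      · exact Finset.mem_insert_self _ _
      · exact Finset.mem_insert_of_mem (Finset.mem_erase.mpr ⟨hxc,
          mem_pdef.mpr ⟨hx, fun s hs => hunc s (Finset.mem_insert_of_mem hs)⟩⟩)
    · intro hx
      rcases Finset.mem_insert.mp hx with rfl | hx
      · refine ⟨hbV, fun s hs => ?_⟩
        rcases Finset.mem_insert.mp hs with rfl | hs
        · intro hbm
          rcases Finset.mem_insert.mp hbm with h | h
          · exact hcbne h.symm
          · rw [Finset.mem_singleton] at h; exact hane h.symm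
        · intro hb; exact hb' (hP'.sub s hs _ hb)
      · obtain ⟨hxc, hx2⟩ := Finset.mem_erase.mp hx
        obtain ⟨hxV', hunc⟩ := mem_pdef.mp hx2
        refine ⟨hsubV x hxV', fun s hs => ?_⟩
        rcases Finset.mem_insert.mp hs with rfl | hs
        · intro hm
          rcases Finset.mem_insert.mp hm with h | h
          · exact hxc h
          · rw [Finset.mem_singleton] at h; exact hne_a x hxV' h
        · exact hunc s hs
  have hcdP : (pdef V (insert {c, a} P')).card = (pdef V (insert {a, b} Q')).card := by
    rw [hpdefP, hpdefQ]
    rw [Finset.card_insert_of_notMem, Finset.card_erase_of_mem hcdef]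
    · have h1 : 1 ≤ (pdef V' P').card := Finset.card_pos.mpr ⟨c, hcdef⟩
      omega
    · intro hb
      exact hb' (mem_pdef.mp (Finset.mem_of_mem_erase hb)).1
  have hQP : Disjoint (insert {a, b} Q') (insert {c, a} P') := by
    rw [Finset.disjoint_left]
    intro s hs hsP
    rcases Finset.mem_insert.mp hs with rfl | hs
    · rcases Finset.mem_insert.mp hsP with h | h
      · have hbm : b ∈ ({c, a} : Finset (Fin n)) := h ▸ (by simp)
        simp only [Finset.mem_insert, Finset.mem_singleton] at hbm
        rcases hbm with h2 | h2
        · exact hcbne h2.symm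
        · exact hane h2.symm
      · exact ha' (hP'.sub _ h a (by simp))
    · rcases Finset.mem_insert.mp hsP with rfl | h
      · exact ha' (hQ'sub _ hs a (by simp))
      · exact (Finset.disjoint_left.mp hdisj) hs h
  have hmono : pgraph Q' P' ≤ pgraph (insert {a, b} Q') (insert {c, a} P') :=
    pgraph_mono (Finset.subset_insert _ _) (Finset.subset_insert _ _)
  have hAdjca : (pgraph (insert {a, b} Q') (insert {c, a} P')).Adj c a :=
    adj_of_pair (Finset.mem_union_right _ (Finset.mem_insert_self _ _)) (by simp) (by simp) hcane
  have hAdjab : (pgraph (insert {a, b} Q') (insert {c, a} P')).Adj a b :=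
    adj_of_pair (Finset.mem_union_left _ (Finset.mem_insert_self _ _)) (by simp) (by simp) hane
  refine ⟨hPM, hcdP, hQP, ?_, ?_⟩
  · -- f half
    refine ⟨fun x => if x = a ∨ x = b then f' c else f' x, ?_, ?_, ?_, ?_⟩
    · intro d hd
      rw [hpdefQ] at hd
      have hdV' := (mem_pdef.mp hd).1
      simp only
      rw [if_neg (by push_neg; exact ⟨hne_a d hdV', hne_b d hdV'⟩)]
      exact hf'.1 d hd
    · intro i hi
      simp only
      rw [hpdefQ]
      rcases (hV i).mp hi with rfl | rfl | hx
      · rw [if_pos (Or.inl rfl)]; exact hf'.2.1 c hcV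
      · rw [if_pos (Or.inr rfl)]; exact hf'.2.1 c hcV
      · rw [if_neg (by push_neg; exact ⟨hne_a i hx, hne_b i hx⟩)]; exact hf'.2.1 i hx
    · intro i j hadj
      obtain ⟨hne, s, hsU, his, hjs⟩ := pgraph_adj.mp hadj
      simp only
      rcases Finset.mem_union.mp hsU with hsQ | hsP
      · rcases Finset.mem_insert.mp hsQ with rfl | hsQ'
        · have key : ∀ x ∈ ({a, b} : Finset (Fin n)), (if x = a ∨ x = b then f' c else f' x) = f' c := by
            intro x hx
            rcases Finset.mem_insert.mp hx with rfl | hx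
            · rw [if_pos (Or.inl rfl)]
            · rw [Finset.mem_singleton] at hx; subst hx; rw [if_pos (Or.inr rfl)]
          rw [key i his, key j hjs]
        · have hiV' := hQ'sub s hsQ' i his
          have hjV' := hQ'sub s hsQ' j hjs
          rw [if_neg (by push_neg; exact ⟨hne_a i hiV', hne_b i hiV'⟩),
            if_neg (by push_neg; exact ⟨hne_a j hjV', hne_b j hjV'⟩)]
          exact hf'.2.2.1 i j (adj_of_pair (Finset.mem_union_left _ hsQ') his hjs hne)
      · rcases Finset.mem_insert.mp hsP with rfl | hsP'
        · have key : ∀ x ∈ ({c, a} : Finset (Fin n)), (if x = a ∨ x = b then f' c else f' x) = f' c := by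
            intro x hx
            rcases Finset.mem_insert.mp hx with rfl | hx
            · rw [if_neg (by push_neg; exact ⟨hcane, hcbne⟩)]
            · rw [Finset.mem_singleton] at hx; subst hx; rw [if_pos (Or.inl rfl)]
          rw [key i his, key j hjs]
        · have hiV' := hP'.sub s hsP' i his
          have hjV' := hP'.sub s hsP' j hjs
          rw [if_neg (by push_neg; exact ⟨hne_a i hiV', hne_b i hiV'⟩),
            if_neg (by push_neg; exact ⟨hne_a j hjV', hne_b j hjV'⟩)]
          exact hf'.2.2.1 i j (adj_of_pair (Finset.mem_union_right _ hsP') his hjs hne)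
    · intro i hi
      simp only
      rcases (hV i).mp hi with rfl | rfl | hx
      · rw [if_pos (Or.inl rfl)]
        exact hAdjca.symm.reachable.trans ((hf'.2.2.2 c hcV).mono hmono)
      · rw [if_pos (Or.inr rfl)]
        exact (hAdjab.symm.reachable).trans
          (hAdjca.symm.reachable.trans ((hf'.2.2.2 c hcV).mono hmono))
      · rw [if_neg (by push_neg; exact ⟨hne_a i hx, hne_b i hx⟩)]
        exact (hf'.2.2.2 i hx).mono hmono
  · -- g half
    have gval : ∀ x, x ≠ a → x ≠ b →
        (if x = a ∨ x = b then b else if g' x = c then b else g' x) =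
          if g' x = c then b else g' x := by
      intro x h1 h2
      rw [if_neg]; push_neg; exact ⟨h1, h2⟩
    refine ⟨fun x => if x = a ∨ x = b then b else if g' x = c then b else g' x, ?_, ?_, ?_, ?_⟩
    · intro d hd
      rw [hpdefP] at hd
      simp only
      rcases Finset.mem_insert.mp hd with rfl | hd
      · rw [if_pos (Or.inr rfl)]
      · obtain ⟨hdc, hd'⟩ := Finset.mem_erase.mp hd
        have hdV' := (mem_pdef.mp hd').1
        rw [gval d (hne_a d hdV') (hne_b d hdV'), hg'.1 d hd', if_neg hdc]
    · intro i hi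
      simp only
      rw [hpdefP]
      rcases (hV i).mp hi with rfl | rfl | hx
      · rw [if_pos (Or.inl rfl)]; exact Finset.mem_insert_self _ _
      · rw [if_pos (Or.inr rfl)]; exact Finset.mem_insert_self _ _
      · rw [gval i (hne_a i hx) (hne_b i hx)]
        by_cases hc : g' i = c
        · rw [if_pos hc]; exact Finset.mem_insert_self _ _
        · rw [if_neg hc]
          exact Finset.mem_insert_of_mem (Finset.mem_erase.mpr ⟨hc, hg'.2.1 i hx⟩)
    · intro i j hadj
      obtain ⟨hne, s, hsU, his, hjs⟩ := pgraph_adj.mp hadj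
      simp only
      rcases Finset.mem_union.mp hsU with hsQ | hsP
      · rcases Finset.mem_insert.mp hsQ with rfl | hsQ'
        · have key : ∀ x ∈ ({a, b} : Finset (Fin n)),
              (if x = a ∨ x = b then b else if g' x = c then b else g' x) = b := by
            intro x hx
            rcases Finset.mem_insert.mp hx with h | hx
            · rw [h, if_pos (Or.inl rfl)]
            · rw [Finset.mem_singleton] at hx; rw [hx, if_pos (Or.inr rfl)]
          rw [key i his, key j hjs]
        · have hiV' := hQ'sub s hsQ' i his
          have hjV' := hQ'sub s hsQ' j hjs
          have hgg := hg'.2.2.1 i j (adj_of_pair (Finset.mem_union_left _ hsQ') his hjs hne)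
          rw [gval i (hne_a i hiV') (hne_b i hiV'), gval j (hne_a j hjV') (hne_b j hjV'), hgg]
      · rcases Finset.mem_insert.mp hsP with rfl | hsP'
        · have key : ∀ x ∈ ({c, a} : Finset (Fin n)),
              (if x = a ∨ x = b then b else if g' x = c then b else g' x) = b := by
            intro x hx
            rcases Finset.mem_insert.mp hx with h | hx
            · rw [h, gval c hcane hcbne, if_pos (hg'.1 c hcdef)]
            · rw [Finset.mem_singleton] at hx; rw [hx, if_pos (Or.inl rfl)]
          rw [key i his, key j hjs]
        · have hiV' := hP'.sub s hsP' i his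
          have hjV' := hP'.sub s hsP' j hjs
          have hgg := hg'.2.2.1 i j (adj_of_pair (Finset.mem_union_right _ hsP') his hjs hne)
          rw [gval i (hne_a i hiV') (hne_b i hiV'), gval j (hne_a j hjV') (hne_b j hjV'), hgg]
    · intro i hi
      simp only
      rcases (hV i).mp hi with rfl | rfl | hx
      · rw [if_pos (Or.inl rfl)]; exact hAdjab.reachable
      · rw [if_pos (Or.inr rfl)]
      · rw [gval i (hne_a i hx) (hne_b i hx)]
        by_cases hc : g' i = c
        · rw [if_pos hc]
          have h1 : (pgraph (insert {a, b} Q') (insert {c, a} P')).Reachable i c := by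
            have := (hg'.2.2.2 i hx).mono hmono
            rwa [hc] at this
          exact h1.trans (hAdjca.reachable.trans hAdjab.reachable)
        · rw [if_neg hc]
          exact (hg'.2.2.2 i hx).mono hmono


lemma splice_L_paired (V V' : Finset (Fin n)) (Q' P' : Pairs n) (a b c z : Fin n)
    (hab : a < b) (hca : c < a)
    (hV : ∀ x, x ∈ V ↔ x = a ∨ x = b ∨ x ∈ V') (ha' : a ∉ V') (hb' : b ∉ V') (hcV : c ∈ V')
    (hgap : ∀ x ∈ V, ¬(a < x ∧ x < b))
    (hcmax : ∀ x ∈ V, x < a → x ≤ c)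
    (hP' : IsPM V' P') (hQ'sub : ∀ s ∈ Q', ∀ i ∈ s, i ∈ V')
    (hdisj : Disjoint Q' P')
    (hcard : (pdef V' P').card = (pdef V' Q').card)
    (hzc : z ≠ c) (hs₀ : ({c, z} : Finset (Fin n)) ∈ P')
    (f' g' : Fin n → Fin n)
    (hf' : Half V' Q' (pgraph Q' P') f') (hg' : Half V' P' (pgraph Q' P') g') :
    Good V (insert {a, b} Q') (insert {c, a} (insert {z, b} (P'.erase {c, z}))) := by
  have hcb : c < b := hca.trans hab
  have hane : a ≠ b := ne_of_lt hab
  have hcane : c ≠ a := ne_of_lt hca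
  have hcbne : c ≠ b := ne_of_lt hcb
  have haV : a ∈ V := (hV a).mpr (Or.inl rfl)
  have hbV : b ∈ V := (hV b).mpr (Or.inr (Or.inl rfl))
  have hsubV : ∀ x ∈ V', x ∈ V := fun x hx => (hV x).mpr (Or.inr (Or.inr hx))
  have hcVV : c ∈ V := hsubV c hcV
  have hne_a : ∀ x ∈ V', x ≠ a := fun x hx h => ha' (h ▸ hx)
  have hne_b : ∀ x ∈ V', x ≠ b := fun x hx h => hb' (h ▸ hx)
  have hV'lt : ∀ x ∈ V', x < a ∨ b < x := by
    intro x hx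
    rcases lt_trichotomy x a with h | h | h
    · exact Or.inl h
    · exact absurd h (hne_a x hx)
    · right
      rcases lt_trichotomy x b with h2 | h2 | h2
      · exact absurd ⟨h, h2⟩ (hgap x (hsubV x hx))
      · exact absurd h2 (hne_b x hx)
      · exact h2
  have hV'gt : ∀ x ∈ V', c < x → b < x := by
    intro x hx h
    rcases hV'lt x hx with h2 | h2
    · exact absurd (hcmax x (hsubV x hx) h2) (not_le_of_gt h)
    · exact h2
  have hzV' : z ∈ V' := hP'.sub _ hs₀ z (by simp)
  have hza : z ≠ a := hne_a z hzV'
  have hzb : z ≠ b := hne_b z hzV'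
  have hzdichot : z < c ∨ b < z := by
    rcases hV'lt z hzV' with h | h
    · exact Or.inl (lt_of_le_of_ne (hcmax z (hsubV z hzV') h) hzc)
    · exact Or.inr h
  have hcpair : ∀ t ∈ P', c ∈ t → t = ({c, z} : Finset (Fin n)) :=
    fun t ht hct => same_pair_eq hP'.disj ht hs₀ hct (by simp)
  have hzpair : ∀ t ∈ P', z ∈ t → t = ({c, z} : Finset (Fin n)) :=
    fun t ht hzt => same_pair_eq hP'.disj ht hs₀ hzt (by simp)
  have hmemP : ∀ s : Finset (Fin n),
      s ∈ insert {c, a} (insert {z, b} (P'.erase {c, z})) ↔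
        s = {c, a} ∨ s = {z, b} ∨ (s ∈ P' ∧ s ≠ {c, z}) := by
    intro s
    simp only [Finset.mem_insert, Finset.mem_erase]
    tauto
  have hPM : IsPM V (insert {c, a} (insert {z, b} (P'.erase {c, z}))) := by
    have d1 : Disjoint ({c, a} : Finset (Fin n)) ({z, b} : Finset (Fin n)) := by
      rw [Finset.disjoint_left]
      intro x hx hx2
      rcases Finset.mem_insert.mp hx with h1 | hx
      · rw [h1] at hx2
        rcases Finset.mem_insert.mp hx2 with h | h
        · exact hzc h.symm
        · rw [Finset.mem_singleton] at h; exact hcbne h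
      · rw [Finset.mem_singleton] at hx
        rw [hx] at hx2
        rcases Finset.mem_insert.mp hx2 with h | h
        · exact hza h.symm
        · rw [Finset.mem_singleton] at h; exact hane h
    have d2 : ∀ t ∈ P', t ≠ ({c, z} : Finset (Fin n)) →
        Disjoint ({c, a} : Finset (Fin n)) t := by
      intro t ht htne
      rw [Finset.disjoint_left]
      intro x hx hxt
      rcases Finset.mem_insert.mp hx with h1 | hx
      · rw [h1] at hxt; exact htne (hcpair t ht hxt)
      · rw [Finset.mem_singleton] at hx; rw [hx] at hxt; exact ha' (hP'.sub t ht _ hxt)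
    have d3 : ∀ t ∈ P', t ≠ ({c, z} : Finset (Fin n)) →
        Disjoint ({z, b} : Finset (Fin n)) t := by
      intro t ht htne
      rw [Finset.disjoint_left]
      intro x hx hxt
      rcases Finset.mem_insert.mp hx with h1 | hx
      · rw [h1] at hxt; exact htne (hzpair t ht hxt)
      · rw [Finset.mem_singleton] at hx; rw [hx] at hxt; exact hb' (hP'.sub t ht _ hxt)
    constructor
    · intro s hs
      rcases (hmemP s).mp hs with rfl | rfl | ⟨hs, _⟩
      · exact Finset.card_pair hcane
      · exact Finset.card_pair hzb
      · exact hP'.card_two s hs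
    · intro s hs t ht hst
      rcases (hmemP s).mp hs with rfl | rfl | ⟨hs1, hs2⟩ <;>
        rcases (hmemP t).mp ht with rfl | rfl | ⟨ht1, ht2⟩
      · exact absurd rfl hst
      · exact d1
      · exact d2 t ht1 ht2
      · exact d1.symm
      · exact absurd rfl hst
      · exact d3 t ht1 ht2
      · exact (d2 s hs1 hs2).symm
      · exact (d3 s hs1 hs2).symm
      · exact hP'.disj s hs1 t ht1 hst
    · intro s hs i hi
      rcases (hmemP s).mp hs with h | h | ⟨hs1, _⟩
      · rw [h] at hi
        rcases Finset.mem_insert.mp hi with h1 | hi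
        · rw [h1]; exact hcVV
        · rw [Finset.mem_singleton] at hi; rw [hi]; exact haV
      · rw [h] at hi
        rcases Finset.mem_insert.mp hi with h1 | hi
        · rw [h1]; exact hsubV z hzV'
        · rw [Finset.mem_singleton] at hi; rw [hi]; exact hbV
      · exact hsubV i (hP'.sub s hs1 i hi)
    · intro s hs i hi j hj hij k hkV hik hkj
      rcases (hmemP s).mp hs with h | h | ⟨hsP', hsne⟩
      · -- s = {c,a}
        have hres := pair_lt_resolve h hca hi hj hij
        rw [hres.1] at hik
        rw [hres.2] at hkj
        rw [hres.1, hres.2]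
        refine ⟨{c, a}, Finset.mem_insert_self _ _, ?_, ?_⟩
        · rcases (hV k).mp hkV with hk | hk | hk
          · rw [hk]; exact Finset.mem_insert_of_mem (Finset.mem_singleton_self _)
          · rw [hk] at hkj; exact absurd hkj (not_le_of_gt hab)
          · have h1 : k < a := lt_of_le_of_ne hkj (hne_a k hk)
            have hkc : k = c := le_antisymm (hcmax k (hsubV k hk) h1) hik
            rw [hkc]; exact Finset.mem_insert_self _ _
        · intro l hl
          rcases Finset.mem_insert.mp hl with rfl | hl
          · exact ⟨le_refl _, hca.le⟩
          · rw [Finset.mem_singleton] at hl; subst hl; exact ⟨hca.le, le_refl _⟩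
      · -- s = {z,b}
        have hmemzb : ({z, b} : Finset (Fin n)) ∈
            insert {c, a} (insert {z, b} (P'.erase {c, z})) :=
          Finset.mem_insert_of_mem (Finset.mem_insert_self _ _)
        have hmemca : ({c, a} : Finset (Fin n)) ∈
            insert {c, a} (insert {z, b} (P'.erase {c, z})) := Finset.mem_insert_self _ _
        rcases hzdichot with hzlt | hzgt
        · -- z < c, so s = {z, b} with z < b
          have hres := pair_lt_resolve h (hzlt.trans hcb) hi hj hij
          rw [hres.1] at hik
          rw [hres.2] at hkj
          rw [hres.1, hres.2]
          have hboundsca : ∀ l ∈ ({c, a} : Finset (Fin n)), z ≤ l ∧ l ≤ b := by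
            intro l hl
            rcases Finset.mem_insert.mp hl with rfl | hl
            · exact ⟨hzlt.le, hcb.le⟩
            · rw [Finset.mem_singleton] at hl; subst hl
              exact ⟨(hzlt.trans hca).le, hab.le⟩
          rcases (hV k).mp hkV with hk | hk | hk
          · refine ⟨{c, a}, hmemca, ?_, hboundsca⟩
            rw [hk]; exact Finset.mem_insert_of_mem (Finset.mem_singleton_self _)
          · refine ⟨{z, b}, hmemzb, ?_, ?_⟩
            · rw [hk]; exact Finset.mem_insert_of_mem (Finset.mem_singleton_self _)
            · intro l hl
              rcases Finset.mem_insert.mp hl with rfl | hl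
              · exact ⟨le_refl _, (hzlt.trans hcb).le⟩
              · rw [Finset.mem_singleton] at hl; subst hl
                exact ⟨(hzlt.trans hcb).le, le_refl _⟩
          · by_cases hkc : k = c
            · refine ⟨{c, a}, hmemca, ?_, hboundsca⟩
              rw [hkc]; exact Finset.mem_insert_self _ _
            · have hkb : k < b := lt_of_le_of_ne hkj (hne_b k hk)
              have hka : k < a := by
                rcases hV'lt k hk with h2 | h2
                · exact h2
                · exact absurd hkb (not_lt_of_gt h2)
              have hkc2 : k < c := lt_of_le_of_ne (hcmax k (hsubV k hk) hka) hkc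
              obtain ⟨t, htP', hkt, hbd⟩ := hP'.planar {c, z} hs₀ z (by simp) c (by simp)
                hzlt k hk hik hkc2.le
              by_cases hts₀ : t = ({c, z} : Finset (Fin n))
              · subst hts₀
                have hkz : k = z := by
                  rcases Finset.mem_insert.mp hkt with h2 | h2
                  · exact absurd h2 hkc
                  · rwa [Finset.mem_singleton] at h2
                refine ⟨{z, b}, hmemzb, ?_, ?_⟩
                · rw [hkz]; exact Finset.mem_insert_self _ _
                · intro l hl
                  rcases Finset.mem_insert.mp hl with rfl | hl
                  · exact ⟨le_refl _, (hzlt.trans hcb).le⟩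
                  · rw [Finset.mem_singleton] at hl; subst hl
                    exact ⟨(hzlt.trans hcb).le, le_refl _⟩
              · refine ⟨t, (hmemP t).mpr (Or.inr (Or.inr ⟨htP', hts₀⟩)), hkt, ?_⟩
                intro l hl
                exact ⟨(hbd l hl).1, le_trans (hbd l hl).2 hcb.le⟩
        · -- b < z, so s = {z, b} = {b, z} with b < z
          have h' : s = ({b, z} : Finset (Fin n)) := by rw [h, Finset.pair_comm]
          have hres := pair_lt_resolve h' hzgt hi hj hij
          rw [hres.1] at hik
          rw [hres.2] at hkj
          rw [hres.1, hres.2]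
          rcases (hV k).mp hkV with hk | hk | hk
          · rw [hk] at hik; exact absurd hik (not_le_of_gt hab)
          · refine ⟨{z, b}, hmemzb, ?_, ?_⟩
            · rw [hk]; exact Finset.mem_insert_of_mem (Finset.mem_singleton_self _)
            · intro l hl
              rcases Finset.mem_insert.mp hl with rfl | hl
              · exact ⟨hzgt.le, le_refl _⟩
              · rw [Finset.mem_singleton] at hl; subst hl; exact ⟨le_refl _, hzgt.le⟩
          · have hck : c ≤ k := le_trans hcb.le hik
            obtain ⟨t, htP', hkt, hbd⟩ := hP'.planar {c, z} hs₀ c (by simp) z (by simp)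
              (hcb.trans hzgt) k hk hck hkj
            by_cases hts₀ : t = ({c, z} : Finset (Fin n))
            · subst hts₀
              have hkz : k = z := by
                rcases Finset.mem_insert.mp hkt with h2 | h2
                · subst h2
                  exact absurd hik (not_le_of_gt hcb)
                · rwa [Finset.mem_singleton] at h2
              refine ⟨{z, b}, hmemzb, ?_, ?_⟩
              · rw [hkz]; exact Finset.mem_insert_self _ _
              · intro l hl
                rcases Finset.mem_insert.mp hl with rfl | hl
                · exact ⟨hzgt.le, le_refl _⟩
                · rw [Finset.mem_singleton] at hl; subst hl; exact ⟨le_refl _, hzgt.le⟩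
            · refine ⟨t, (hmemP t).mpr (Or.inr (Or.inr ⟨htP', hts₀⟩)), hkt, ?_⟩
              intro l hl
              have hlV' : l ∈ V' := hP'.sub t htP' l hl
              have hlc : l ≠ c := by
                intro h2
                exact hts₀ (hcpair t htP' (h2 ▸ hl))
              have hcl : c < l := lt_of_le_of_ne (hbd l hl).1 (Ne.symm hlc)
              exact ⟨(hV'gt l hlV' hcl).le, (hbd l hl).2⟩
      · -- s ∈ P', s ≠ {c,z}
        have hiV' : i ∈ V' := hP'.sub s hsP' i hi
        have hjV' : j ∈ V' := hP'.sub s hsP' j hj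
        have hmemzb : ({z, b} : Finset (Fin n)) ∈
            insert {c, a} (insert {z, b} (P'.erase {c, z})) :=
          Finset.mem_insert_of_mem (Finset.mem_insert_self _ _)
        have hmemca : ({c, a} : Finset (Fin n)) ∈
            insert {c, a} (insert {z, b} (P'.erase {c, z})) := Finset.mem_insert_self _ _
        have hjc : c ∈ s → False := fun h2 => hsne (hcpair s hsP' h2)
        rcases (hV k).mp hkV with hk | hk | hk
        · -- k = a
          rw [hk] at hik hkj ⊢
          have hia : i < a := lt_of_le_of_ne hik (hne_a i hiV')
          have hic : i ≤ c := hcmax i (hsubV i hiV') hia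
          have hbj : b < j := by
            rcases hV'lt j hjV' with h2 | h2
            · exact absurd hkj (not_le_of_gt h2)
            · exact h2
          refine ⟨{c, a}, hmemca, Finset.mem_insert_of_mem (Finset.mem_singleton_self _), ?_⟩
          intro l hl
          rcases Finset.mem_insert.mp hl with rfl | hl
          · exact ⟨hic, le_trans hcb.le hbj.le⟩
          · rw [Finset.mem_singleton] at hl; subst hl
            exact ⟨hik, le_trans hab.le hbj.le⟩
        · -- k = b
          rw [hk] at hik hkj ⊢
          have hib : i < b := lt_of_le_of_ne hik (hne_b i hiV')
          have hia : i < a := by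
            rcases hV'lt i hiV' with h2 | h2
            · exact h2
            · exact absurd hib (not_lt_of_gt h2)
          have hic : i ≤ c := hcmax i (hsubV i hiV') hia
          have hbj : b < j := lt_of_le_of_ne hkj (Ne.symm (hne_b j hjV'))
          have hcj : c ≤ j := le_trans hcb.le hbj.le
          obtain ⟨t, htP', hct, hbd⟩ := hP'.planar s hsP' i hi j hj hij c hcV hic hcj
          have hts₀ : t = ({c, z} : Finset (Fin n)) := hcpair t htP' hct
          subst hts₀
          have hz1 := hbd z (by simp)
          refine ⟨{z, b}, hmemzb, Finset.mem_insert_of_mem (Finset.mem_singleton_self _), ?_⟩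
          intro l hl
          rcases Finset.mem_insert.mp hl with rfl | hl
          · exact hz1
          · rw [Finset.mem_singleton] at hl; subst hl
            exact ⟨hik, hbj.le⟩
        · -- k ∈ V'
          obtain ⟨t, htP', hkt, hbd⟩ := hP'.planar s hsP' i hi j hj hij k hk hik hkj
          by_cases hts₀ : t = ({c, z} : Finset (Fin n))
          · subst hts₀
            have hcbd := hbd c (by simp)
            have hzbd := hbd z (by simp)
            have hjc2 : c < j := lt_of_le_of_ne hcbd.2 (fun h2 => hjc (h2 ▸ hj))
            have hbj : b < j := hV'gt j hjV' hjc2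
            rcases Finset.mem_insert.mp hkt with hk2 | hk2
            · -- k = c
              refine ⟨{c, a}, hmemca, by rw [hk2]; exact Finset.mem_insert_self _ _, ?_⟩
              intro l hl
              rcases Finset.mem_insert.mp hl with rfl | hl
              · exact ⟨hcbd.1, hcbd.2⟩
              · rw [Finset.mem_singleton] at hl; subst hl
                exact ⟨le_trans hcbd.1 hca.le, le_trans hab.le hbj.le⟩
            · -- k = z
              rw [Finset.mem_singleton] at hk2
              refine ⟨{z, b}, hmemzb, by rw [hk2]; exact Finset.mem_insert_self _ _, ?_⟩
              intro l hl
              rcases Finset.mem_insert.mp hl with rfl | hl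
              · exact hzbd
              · rw [Finset.mem_singleton] at hl; subst hl
                exact ⟨le_trans hcbd.1 hcb.le, hbj.le⟩
          · exact ⟨t, (hmemP t).mpr (Or.inr (Or.inr ⟨htP', hts₀⟩)), hkt, hbd⟩
  have hpdefQ : pdef V (insert {a, b} Q') = pdef V' Q' := by
    ext x
    rw [mem_pdef, mem_pdef]
    constructor
    · rintro ⟨hxV, hunc⟩
      have hxa : x ≠ a := by rintro rfl; exact hunc _ (Finset.mem_insert_self _ _) (by simp)
      have hxb : x ≠ b := by rintro rfl; exact hunc _ (Finset.mem_insert_self _ _) (by simp)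
      rcases (hV x).mp hxV with rfl | rfl | hx
      · exact absurd rfl hxa
      · exact absurd rfl hxb
      · exact ⟨hx, fun s hs => hunc s (Finset.mem_insert_of_mem hs)⟩
    · rintro ⟨hxV', hunc⟩
      refine ⟨hsubV x hxV', fun s hs => ?_⟩
      rcases Finset.mem_insert.mp hs with rfl | hs
      · simp only [Finset.mem_insert, Finset.mem_singleton]
        push_neg
        exact ⟨hne_a x hxV', hne_b x hxV'⟩
      · exact hunc s hs
  have hpdefP : pdef V (insert {c, a} (insert {z, b} (P'.erase {c, z}))) = pdef V' P' := by
    ext x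
    rw [mem_pdef, mem_pdef]
    constructor
    · rintro ⟨hxV, hunc⟩
      have hxa : x ≠ a := by
        rintro rfl
        exact hunc _ (Finset.mem_insert_self _ _) (by simp)
      have hxc : x ≠ c := by
        rintro rfl
        exact hunc _ (Finset.mem_insert_self _ _) (by simp)
      have hxb : x ≠ b := by
        rintro rfl
        exact hunc _ (Finset.mem_insert_of_mem (Finset.mem_insert_self _ _)) (by simp)
      have hxz : x ≠ z := by
        rintro rfl
        exact hunc _ (Finset.mem_insert_of_mem (Finset.mem_insert_self _ _)) (by simp)
      rcases (hV x).mp hxV with rfl | rfl | hx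
      · exact absurd rfl hxa
      · exact absurd rfl hxb
      · refine ⟨hx, fun s hs => ?_⟩
        by_cases hss : s = ({c, z} : Finset (Fin n))
        · subst hss
          simp only [Finset.mem_insert, Finset.mem_singleton]
          push_neg
          exact ⟨hxc, hxz⟩
        · exact hunc s ((hmemP s).mpr (Or.inr (Or.inr ⟨hs, hss⟩)))
    · rintro ⟨hxV', hunc⟩
      have hxs₀ := hunc _ hs₀
      have hxc : x ≠ c := by rintro rfl; exact hxs₀ (by simp)
      have hxz : x ≠ z := by rintro rfl; exact hxs₀ (by simp)
      refine ⟨hsubV x hxV', fun s hs => ?_⟩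
      rcases (hmemP s).mp hs with rfl | rfl | ⟨hs1, _⟩
      · simp only [Finset.mem_insert, Finset.mem_singleton]
        push_neg
        exact ⟨hxc, hne_a x hxV'⟩
      · simp only [Finset.mem_insert, Finset.mem_singleton]
        push_neg
        exact ⟨hxz, hne_b x hxV'⟩
      · exact hunc s hs1
  have hcdP : (pdef V (insert {c, a} (insert {z, b} (P'.erase {c, z})))).card =
      (pdef V (insert {a, b} Q')).card := by
    rw [hpdefP, hpdefQ, hcard]
  have hQP : Disjoint (insert {a, b} Q') (insert {c, a} (insert {z, b} (P'.erase {c, z}))) := by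
    rw [Finset.disjoint_left]
    intro s hs hsP
    rcases Finset.mem_insert.mp hs with rfl | hs
    · rcases (hmemP _).mp hsP with h | h | ⟨h1, _⟩
      · have hbm : b ∈ ({c, a} : Finset (Fin n)) := h ▸ (by simp)
        simp only [Finset.mem_insert, Finset.mem_singleton] at hbm
        rcases hbm with h2 | h2
        · exact hcbne h2.symm
        · exact hane h2.symm
      · have ham : a ∈ ({z, b} : Finset (Fin n)) := h ▸ (by simp)
        simp only [Finset.mem_insert, Finset.mem_singleton] at ham
        rcases ham with h2 | h2
        · exact hza h2.symm
        · exact hane h2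
      · exact ha' (hP'.sub _ h1 a (by simp))
    · rcases (hmemP _).mp hsP with rfl | rfl | ⟨h1, _⟩
      · exact ha' (hQ'sub _ hs a (by simp))
      · exact hb' (hQ'sub _ hs b (by simp))
      · exact (Finset.disjoint_left.mp hdisj) hs h1
  have hAdjca : (pgraph (insert {a, b} Q')
      (insert {c, a} (insert {z, b} (P'.erase {c, z})))).Adj c a :=
    adj_of_pair (Finset.mem_union_right _ (Finset.mem_insert_self _ _)) (by simp) (by simp) hcane
  have hAdjab : (pgraph (insert {a, b} Q')
      (insert {c, a} (insert {z, b} (P'.erase {c, z})))).Adj a b :=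
    adj_of_pair (Finset.mem_union_left _ (Finset.mem_insert_self _ _)) (by simp) (by simp) hane
  have hAdjzb : (pgraph (insert {a, b} Q')
      (insert {c, a} (insert {z, b} (P'.erase {c, z})))).Adj z b :=
    adj_of_pair (Finset.mem_union_right _
      (Finset.mem_insert_of_mem (Finset.mem_insert_self _ _))) (by simp) (by simp) hzb
  have hlift : ∀ x y, (pgraph Q' P').Adj x y →
      (pgraph (insert {a, b} Q') (insert {c, a} (insert {z, b} (P'.erase {c, z})))).Reachable x y := by
    intro x y hxy
    obtain ⟨hne, s, hsU, hx, hy⟩ := pgraph_adj.mp hxy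
    rcases Finset.mem_union.mp hsU with hsQ | hsP
    · exact (adj_of_pair (Finset.mem_union_left _ (Finset.mem_insert_of_mem hsQ)) hx hy hne).reachable
    · by_cases hts₀ : s = ({c, z} : Finset (Fin n))
      · subst hts₀
        have hreach : (pgraph (insert {a, b} Q')
            (insert {c, a} (insert {z, b} (P'.erase {c, z})))).Reachable c z :=
          hAdjca.reachable.trans (hAdjab.reachable.trans hAdjzb.symm.reachable)
        rcases Finset.mem_insert.mp hx with rfl | hx
        · rcases Finset.mem_insert.mp hy with h2 | h2
          · exact absurd h2.symm hne
          · rw [Finset.mem_singleton] at h2; subst h2; exact hreach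
        · rw [Finset.mem_singleton] at hx; subst hx
          rcases Finset.mem_insert.mp hy with h2 | h2
          · subst h2; exact hreach.symm
          · rw [Finset.mem_singleton] at h2; subst h2; exact absurd rfl hne
      · exact (adj_of_pair (Finset.mem_union_right _
          ((hmemP s).mpr (Or.inr (Or.inr ⟨hsP, hts₀⟩)))) hx hy hne).reachable
  have hmonoR : ∀ {u v : Fin n}, (pgraph Q' P').Reachable u v →
      (pgraph (insert {a, b} Q') (insert {c, a} (insert {z, b} (P'.erase {c, z})))).Reachable u v :=
    fun h => reach_of_adj_reach hlift h
  have halfbuild : ∀ (A' A : Pairs n) (φ : Fin n → Fin n),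
      pdef V A = pdef V' A' →
      Half V' A' (pgraph Q' P') φ →
      Half V A (pgraph (insert {a, b} Q') (insert {c, a} (insert {z, b} (P'.erase {c, z}))))
        (fun x => if x = a ∨ x = b then φ c else φ x) := by
    intro A' A φ hpd hφ
    refine ⟨?_, ?_, ?_, ?_⟩
    · intro d hd
      rw [hpd] at hd
      have hdV' := (mem_pdef.mp hd).1
      simp only
      rw [if_neg (by push_neg; exact ⟨hne_a d hdV', hne_b d hdV'⟩)]
      exact hφ.1 d hd
    · intro i hi
      simp only
      rw [hpd]
      rcases (hV i).mp hi with rfl | rfl | hx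
      · rw [if_pos (Or.inl rfl)]; exact hφ.2.1 c hcV
      · rw [if_pos (Or.inr rfl)]; exact hφ.2.1 c hcV
      · rw [if_neg (by push_neg; exact ⟨hne_a i hx, hne_b i hx⟩)]; exact hφ.2.1 i hx
    · intro i j hadj
      obtain ⟨hne, s, hsU, his, hjs⟩ := pgraph_adj.mp hadj
      simp only
      rcases Finset.mem_union.mp hsU with hsQ | hsP
      · rcases Finset.mem_insert.mp hsQ with h | hsQ'
        · have key : ∀ x ∈ s, (if x = a ∨ x = b then φ c else φ x) = φ c := by
            intro x hx
            rw [h] at hx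
            rcases Finset.mem_insert.mp hx with h2 | h2
            · rw [h2, if_pos (Or.inl rfl)]
            · rw [Finset.mem_singleton] at h2; rw [h2, if_pos (Or.inr rfl)]
          rw [key i his, key j hjs]
        · have hiV' := hQ'sub s hsQ' i his
          have hjV' := hQ'sub s hsQ' j hjs
          rw [if_neg (by push_neg; exact ⟨hne_a i hiV', hne_b i hiV'⟩),
            if_neg (by push_neg; exact ⟨hne_a j hjV', hne_b j hjV'⟩)]
          exact hφ.2.2.1 i j (adj_of_pair (Finset.mem_union_left _ hsQ') his hjs hne)
      · rcases (hmemP s).mp hsP with h | h | ⟨hsP', hts₀⟩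
        · have key : ∀ x ∈ s, (if x = a ∨ x = b then φ c else φ x) = φ c := by
            intro x hx
            rw [h] at hx
            rcases Finset.mem_insert.mp hx with h2 | h2
            · rw [h2, if_neg (by push_neg; exact ⟨hcane, hcbne⟩)]
            · rw [Finset.mem_singleton] at h2; rw [h2, if_pos (Or.inl rfl)]
          rw [key i his, key j hjs]
        · have hφzc : φ z = φ c := hφ.2.2.1 z c
            (adj_of_pair (Finset.mem_union_right _ hs₀) (by simp) (by simp) hzc)
          have key : ∀ x ∈ s, (if x = a ∨ x = b then φ c else φ x) = φ c := by
            intro x hx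
            rw [h] at hx
            rcases Finset.mem_insert.mp hx with h2 | h2
            · rw [h2, if_neg (by push_neg; exact ⟨hza, hzb⟩)]; exact hφzc
            · rw [Finset.mem_singleton] at h2; rw [h2, if_pos (Or.inr rfl)]
          rw [key i his, key j hjs]
        · have hiV' := hP'.sub s hsP' i his
          have hjV' := hP'.sub s hsP' j hjs
          rw [if_neg (by push_neg; exact ⟨hne_a i hiV', hne_b i hiV'⟩),
            if_neg (by push_neg; exact ⟨hne_a j hjV', hne_b j hjV'⟩)]
          exact hφ.2.2.1 i j (adj_of_pair (Finset.mem_union_right _ hsP') his hjs hne)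
    · intro i hi
      simp only
      rcases (hV i).mp hi with rfl | rfl | hx
      · rw [if_pos (Or.inl rfl)]
        exact hAdjca.symm.reachable.trans (hmonoR (hφ.2.2.2 c hcV))
      · rw [if_pos (Or.inr rfl)]
        exact hAdjab.symm.reachable.trans
          (hAdjca.symm.reachable.trans (hmonoR (hφ.2.2.2 c hcV)))
      · rw [if_neg (by push_neg; exact ⟨hne_a i hx, hne_b i hx⟩)]
        exact hmonoR (hφ.2.2.2 i hx)
  refine ⟨hPM, hcdP, hQP, ?_, ?_⟩
  · exact ⟨fun x => if x = a ∨ x = b then f' c else f' x, halfbuild Q' _ f' hpdefQ hf'⟩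
  · exact ⟨fun x => if x = a ∨ x = b then g' c else g' x, halfbuild P' _ g' hpdefP hg'⟩


lemma splice_R_defect (V V' : Finset (Fin n)) (Q' P' : Pairs n) (a b c : Fin n)
    (hab : a < b) (hbc : b < c)
    (hV : ∀ x, x ∈ V ↔ x = a ∨ x = b ∨ x ∈ V') (ha' : a ∉ V') (hb' : b ∉ V') (hcV : c ∈ V')
    (hcmin : ∀ x ∈ V, b < x → c ≤ x)
    (hlow : ∀ x ∈ V', b < x)
    (hP' : IsPM V' P') (hQ'sub : ∀ s ∈ Q', ∀ i ∈ s, i ∈ V')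
    (hdisj : Disjoint Q' P')
    (hcard : (pdef V' P').card = (pdef V' Q').card)
    (hcdef : c ∈ pdef V' P')
    (f' g' : Fin n → Fin n)
    (hf' : Half V' Q' (pgraph Q' P') f') (hg' : Half V' P' (pgraph Q' P') g') :
    Good V (insert {a, b} Q') (insert {b, c} P') := by
  have hac : a < c := hab.trans hbc
  have hane : a ≠ b := ne_of_lt hab
  have hbcne : b ≠ c := ne_of_lt hbc
  have hacne : a ≠ c := ne_of_lt hac
  have haV : a ∈ V := (hV a).mpr (Or.inl rfl)
  have hbV : b ∈ V := (hV b).mpr (Or.inr (Or.inl rfl))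
  have hsubV : ∀ x ∈ V', x ∈ V := fun x hx => (hV x).mpr (Or.inr (Or.inr hx))
  have hcVV : c ∈ V := hsubV c hcV
  have hne_a : ∀ x ∈ V', x ≠ a := fun x hx h => ha' (h ▸ hx)
  have hne_b : ∀ x ∈ V', x ≠ b := fun x hx h => hb' (h ▸ hx)
  have hcdef2 := (mem_pdef.mp hcdef).2
  have hPM : IsPM V (insert {b, c} P') := by
    have hdisjbc : ∀ t ∈ P', Disjoint ({b, c} : Finset (Fin n)) t := by
      intro t ht
      rw [Finset.disjoint_left]
      intro x hx hxt
      rcases Finset.mem_insert.mp hx with h1 | hx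
      · rw [h1] at hxt; exact hb' (hP'.sub t ht _ hxt)
      · rw [Finset.mem_singleton] at hx; rw [hx] at hxt; exact hcdef2 t ht hxt
    constructor
    · intro s hs
      rcases Finset.mem_insert.mp hs with rfl | hs
      · exact Finset.card_pair hbcne
      · exact hP'.card_two s hs
    · intro s hs t ht hst
      rcases Finset.mem_insert.mp hs with rfl | hs <;> rcases Finset.mem_insert.mp ht with rfl | ht
      · exact absurd rfl hst
      · exact hdisjbc t ht
      · exact (hdisjbc s hs).symm
      · exact hP'.disj s hs t ht hst
    · intro s hs i hi
      rcases Finset.mem_insert.mp hs with rfl | hs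
      · rcases Finset.mem_insert.mp hi with h1 | hi
        · rw [h1]; exact hbV
        · rw [Finset.mem_singleton] at hi; rw [hi]; exact hcVV
      · exact hsubV i (hP'.sub s hs i hi)
    · intro s hs i hi j hj hij k hkV hik hkj
      rcases Finset.mem_insert.mp hs with rfl | hs
      · have hres := pair_lt_resolve rfl hbc hi hj hij
        rw [hres.1] at hik
        rw [hres.2] at hkj
        rw [hres.1, hres.2]
        refine ⟨{b, c}, Finset.mem_insert_self _ _, ?_, ?_⟩
        · rcases (hV k).mp hkV with hk | hk | hk
          · rw [hk] at hik; exact absurd hik (not_le_of_gt hab)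
          · rw [hk]; exact Finset.mem_insert_self _ _
          · have h1 : b < k := hlow k hk
            have hkc : k = c := le_antisymm hkj (hcmin k (hsubV k hk) h1)
            rw [hkc]; exact Finset.mem_insert_of_mem (Finset.mem_singleton_self _)
        · intro l hl
          rcases Finset.mem_insert.mp hl with rfl | hl
          · exact ⟨le_refl _, hbc.le⟩
          · rw [Finset.mem_singleton] at hl; subst hl; exact ⟨hbc.le, le_refl _⟩
      · rcases (hV k).mp hkV with hk | hk | hk
        · rw [hk] at hik
          exact absurd hik (not_le_of_gt (hab.trans (hlow i (hP'.sub s hs i hi))))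
        · rw [hk] at hik
          exact absurd hik (not_le_of_gt (hlow i (hP'.sub s hs i hi)))
        · obtain ⟨t, ht, hkt, hbd⟩ := hP'.planar s hs i hi j hj hij k hk hik hkj
          exact ⟨t, Finset.mem_insert_of_mem ht, hkt, hbd⟩
  have hpdefQ : pdef V (insert {a, b} Q') = pdef V' Q' := by
    ext x
    rw [mem_pdef, mem_pdef]
    constructor
    · rintro ⟨hxV, hunc⟩
      have hxa : x ≠ a := by rintro rfl; exact hunc _ (Finset.mem_insert_self _ _) (by simp)
      have hxb : x ≠ b := by rintro rfl; exact hunc _ (Finset.mem_insert_self _ _) (by simp)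
      rcases (hV x).mp hxV with rfl | rfl | hx
      · exact absurd rfl hxa
      · exact absurd rfl hxb
      · exact ⟨hx, fun s hs => hunc s (Finset.mem_insert_of_mem hs)⟩
    · rintro ⟨hxV', hunc⟩
      refine ⟨hsubV x hxV', fun s hs => ?_⟩
      rcases Finset.mem_insert.mp hs with rfl | hs
      · simp only [Finset.mem_insert, Finset.mem_singleton]
        push_neg
        exact ⟨hne_a x hxV', hne_b x hxV'⟩
      · exact hunc s hs
  have hpdefP : pdef V (insert {b, c} P') = insert a ((pdef V' P').erase c) := by
    ext x
    rw [mem_pdef]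
    constructor
    · rintro ⟨hxV, hunc⟩
      have hxb : x ≠ b := by
        rintro rfl; exact hunc _ (Finset.mem_insert_self _ _) (by simp)
      have hxc : x ≠ c := by
        rintro rfl; exact hunc _ (Finset.mem_insert_self _ _) (by simp)
      rcases (hV x).mp hxV with rfl | rfl | hx
      · exact Finset.mem_insert_self _ _
      · exact absurd rfl hxb
      · exact Finset.mem_insert_of_mem (Finset.mem_erase.mpr ⟨hxc,
          mem_pdef.mpr ⟨hx, fun s hs => hunc s (Finset.mem_insert_of_mem hs)⟩⟩)
    · intro hx
      rcases Finset.mem_insert.mp hx with rfl | hx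
      · refine ⟨haV, fun s hs => ?_⟩
        rcases Finset.mem_insert.mp hs with rfl | hs
        · intro hbm
          rcases Finset.mem_insert.mp hbm with h | h
          · exact hane h
          · rw [Finset.mem_singleton] at h; exact hacne h
        · intro hb; exact ha' (hP'.sub s hs _ hb)
      · obtain ⟨hxc, hx2⟩ := Finset.mem_erase.mp hx
        obtain ⟨hxV', hunc⟩ := mem_pdef.mp hx2
        refine ⟨hsubV x hxV', fun s hs => ?_⟩
        rcases Finset.mem_insert.mp hs with rfl | hs
        · intro hm
          rcases Finset.mem_insert.mp hm with h | h
          · exact hne_b x hxV' h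
          · rw [Finset.mem_singleton] at h; exact hxc h
        · exact hunc s hs
  have hcdP : (pdef V (insert {b, c} P')).card = (pdef V (insert {a, b} Q')).card := by
    rw [hpdefP, hpdefQ]
    rw [Finset.card_insert_of_notMem, Finset.card_erase_of_mem hcdef]
    · have h1 : 1 ≤ (pdef V' P').card := Finset.card_pos.mpr ⟨c, hcdef⟩
      omega
    · intro ha2
      exact ha' (mem_pdef.mp (Finset.mem_of_mem_erase ha2)).1
  have hQP : Disjoint (insert {a, b} Q') (insert {b, c} P') := by
    rw [Finset.disjoint_left]
    intro s hs hsP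
    rcases Finset.mem_insert.mp hs with rfl | hs
    · rcases Finset.mem_insert.mp hsP with h | h
      · have ham : a ∈ ({b, c} : Finset (Fin n)) := h ▸ (by simp)
        simp only [Finset.mem_insert, Finset.mem_singleton] at ham
        rcases ham with h2 | h2
        · exact hane h2
        · exact hacne h2
      · exact ha' (hP'.sub _ h a (by simp))
    · rcases Finset.mem_insert.mp hsP with rfl | h
      · exact hb' (hQ'sub _ hs b (by simp))
      · exact (Finset.disjoint_left.mp hdisj) hs h
  have hmono : pgraph Q' P' ≤ pgraph (insert {a, b} Q') (insert {b, c} P') :=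
    pgraph_mono (Finset.subset_insert _ _) (Finset.subset_insert _ _)
  have hAdjbc : (pgraph (insert {a, b} Q') (insert {b, c} P')).Adj b c :=
    adj_of_pair (Finset.mem_union_right _ (Finset.mem_insert_self _ _)) (by simp) (by simp) hbcne
  have hAdjab : (pgraph (insert {a, b} Q') (insert {b, c} P')).Adj a b :=
    adj_of_pair (Finset.mem_union_left _ (Finset.mem_insert_self _ _)) (by simp) (by simp) hane
  refine ⟨hPM, hcdP, hQP, ?_, ?_⟩
  · refine ⟨fun x => if x = a ∨ x = b then f' c else f' x, ?_, ?_, ?_, ?_⟩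
    · intro d hd
      rw [hpdefQ] at hd
      have hdV' := (mem_pdef.mp hd).1
      simp only
      rw [if_neg (by push_neg; exact ⟨hne_a d hdV', hne_b d hdV'⟩)]
      exact hf'.1 d hd
    · intro i hi
      simp only
      rw [hpdefQ]
      rcases (hV i).mp hi with rfl | rfl | hx
      · rw [if_pos (Or.inl rfl)]; exact hf'.2.1 c hcV
      · rw [if_pos (Or.inr rfl)]; exact hf'.2.1 c hcV
      · rw [if_neg (by push_neg; exact ⟨hne_a i hx, hne_b i hx⟩)]; exact hf'.2.1 i hx
    · intro i j hadj
      obtain ⟨hne, s, hsU, his, hjs⟩ := pgraph_adj.mp hadj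
      simp only
      rcases Finset.mem_union.mp hsU with hsQ | hsP
      · rcases Finset.mem_insert.mp hsQ with h | hsQ'
        · have key : ∀ x ∈ s, (if x = a ∨ x = b then f' c else f' x) = f' c := by
            intro x hx
            rw [h] at hx
            rcases Finset.mem_insert.mp hx with h2 | h2
            · rw [h2, if_pos (Or.inl rfl)]
            · rw [Finset.mem_singleton] at h2; rw [h2, if_pos (Or.inr rfl)]
          rw [key i his, key j hjs]
        · have hiV' := hQ'sub s hsQ' i his
          have hjV' := hQ'sub s hsQ' j hjs
          rw [if_neg (by push_neg; exact ⟨hne_a i hiV', hne_b i hiV'⟩),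
            if_neg (by push_neg; exact ⟨hne_a j hjV', hne_b j hjV'⟩)]
          exact hf'.2.2.1 i j (adj_of_pair (Finset.mem_union_left _ hsQ') his hjs hne)
      · rcases Finset.mem_insert.mp hsP with h | hsP'
        · have key : ∀ x ∈ s, (if x = a ∨ x = b then f' c else f' x) = f' c := by
            intro x hx
            rw [h] at hx
            rcases Finset.mem_insert.mp hx with h2 | h2
            · rw [h2, if_pos (Or.inr rfl)]
            · rw [Finset.mem_singleton] at h2
              rw [h2, if_neg (by push_neg; exact ⟨hacne.symm, hbcne.symm⟩)]
          rw [key i his, key j hjs]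
        · have hiV' := hP'.sub s hsP' i his
          have hjV' := hP'.sub s hsP' j hjs
          rw [if_neg (by push_neg; exact ⟨hne_a i hiV', hne_b i hiV'⟩),
            if_neg (by push_neg; exact ⟨hne_a j hjV', hne_b j hjV'⟩)]
          exact hf'.2.2.1 i j (adj_of_pair (Finset.mem_union_right _ hsP') his hjs hne)
    · intro i hi
      simp only
      rcases (hV i).mp hi with rfl | rfl | hx
      · rw [if_pos (Or.inl rfl)]
        exact hAdjab.reachable.trans
          (hAdjbc.reachable.trans ((hf'.2.2.2 c hcV).mono hmono))
      · rw [if_pos (Or.inr rfl)]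
        exact hAdjbc.reachable.trans ((hf'.2.2.2 c hcV).mono hmono)
      · rw [if_neg (by push_neg; exact ⟨hne_a i hx, hne_b i hx⟩)]
        exact (hf'.2.2.2 i hx).mono hmono
  · have gval : ∀ x, x ≠ a → x ≠ b →
        (if x = a ∨ x = b then a else if g' x = c then a else g' x) =
          if g' x = c then a else g' x := by
      intro x h1 h2
      rw [if_neg]; push_neg; exact ⟨h1, h2⟩
    refine ⟨fun x => if x = a ∨ x = b then a else if g' x = c then a else g' x, ?_, ?_, ?_, ?_⟩
    · intro d hd
      rw [hpdefP] at hd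
      simp only
      rcases Finset.mem_insert.mp hd with rfl | hd
      · rw [if_pos (Or.inl rfl)]
      · obtain ⟨hdc, hd'⟩ := Finset.mem_erase.mp hd
        have hdV' := (mem_pdef.mp hd').1
        rw [gval d (hne_a d hdV') (hne_b d hdV'), hg'.1 d hd', if_neg hdc]
    · intro i hi
      simp only
      rw [hpdefP]
      rcases (hV i).mp hi with rfl | rfl | hx
      · rw [if_pos (Or.inl rfl)]; exact Finset.mem_insert_self _ _
      · rw [if_pos (Or.inr rfl)]; exact Finset.mem_insert_self _ _
      · rw [gval i (hne_a i hx) (hne_b i hx)]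
        by_cases hc : g' i = c
        · rw [if_pos hc]; exact Finset.mem_insert_self _ _
        · rw [if_neg hc]
          exact Finset.mem_insert_of_mem (Finset.mem_erase.mpr ⟨hc, hg'.2.1 i hx⟩)
    · intro i j hadj
      obtain ⟨hne, s, hsU, his, hjs⟩ := pgraph_adj.mp hadj
      simp only
      rcases Finset.mem_union.mp hsU with hsQ | hsP
      · rcases Finset.mem_insert.mp hsQ with h | hsQ'
        · have key : ∀ x ∈ s,
              (if x = a ∨ x = b then a else if g' x = c then a else g' x) = a := by
            intro x hx
            rw [h] at hx
            rcases Finset.mem_insert.mp hx with h2 | h2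
            · rw [h2, if_pos (Or.inl rfl)]
            · rw [Finset.mem_singleton] at h2; rw [h2, if_pos (Or.inr rfl)]
          rw [key i his, key j hjs]
        · have hiV' := hQ'sub s hsQ' i his
          have hjV' := hQ'sub s hsQ' j hjs
          have hgg := hg'.2.2.1 i j (adj_of_pair (Finset.mem_union_left _ hsQ') his hjs hne)
          rw [gval i (hne_a i hiV') (hne_b i hiV'), gval j (hne_a j hjV') (hne_b j hjV'), hgg]
      · rcases Finset.mem_insert.mp hsP with h | hsP'
        · have key : ∀ x ∈ s,
              (if x = a ∨ x = b then a else if g' x = c then a else g' x) = a := by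
            intro x hx
            rw [h] at hx
            rcases Finset.mem_insert.mp hx with h2 | h2
            · rw [h2, if_pos (Or.inr rfl)]
            · rw [Finset.mem_singleton] at h2
              rw [h2, gval c hacne.symm hbcne.symm, if_pos (hg'.1 c hcdef)]
          rw [key i his, key j hjs]
        · have hiV' := hP'.sub s hsP' i his
          have hjV' := hP'.sub s hsP' j hjs
          have hgg := hg'.2.2.1 i j (adj_of_pair (Finset.mem_union_right _ hsP') his hjs hne)
          rw [gval i (hne_a i hiV') (hne_b i hiV'), gval j (hne_a j hjV') (hne_b j hjV'), hgg]
    · intro i hi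
      simp only
      rcases (hV i).mp hi with rfl | rfl | hx
      · rw [if_pos (Or.inl rfl)]
      · rw [if_pos (Or.inr rfl)]; exact hAdjab.symm.reachable
      · rw [gval i (hne_a i hx) (hne_b i hx)]
        by_cases hc : g' i = c
        · rw [if_pos hc]
          have h1 : (pgraph (insert {a, b} Q') (insert {b, c} P')).Reachable i c := by
            have := (hg'.2.2.2 i hx).mono hmono
            rwa [hc] at this
          exact h1.trans (hAdjbc.symm.reachable.trans hAdjab.symm.reachable)
        · rw [if_neg hc]
          exact (hg'.2.2.2 i hx).mono hmono


lemma splice_R_paired (V V' : Finset (Fin n)) (Q' P' : Pairs n) (a b c z : Fin n)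
    (hab : a < b) (hbc : b < c)
    (hV : ∀ x, x ∈ V ↔ x = a ∨ x = b ∨ x ∈ V') (ha' : a ∉ V') (hb' : b ∉ V') (hcV : c ∈ V')
    (hcmin : ∀ x ∈ V, b < x → c ≤ x)
    (hlow : ∀ x ∈ V', b < x)
    (hP' : IsPM V' P') (hQ'sub : ∀ s ∈ Q', ∀ i ∈ s, i ∈ V')
    (hdisj : Disjoint Q' P')
    (hcard : (pdef V' P').card = (pdef V' Q').card)
    (hzc : z ≠ c) (hs₀ : ({c, z} : Finset (Fin n)) ∈ P')
    (f' g' : Fin n → Fin n)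
    (hf' : Half V' Q' (pgraph Q' P') f') (hg' : Half V' P' (pgraph Q' P') g') :
    Good V (insert {a, b} Q') (insert {b, c} (insert {a, z} (P'.erase {c, z}))) := by
  have hac : a < c := hab.trans hbc
  have hane : a ≠ b := ne_of_lt hab
  have hbcne : b ≠ c := ne_of_lt hbc
  have hacne : a ≠ c := ne_of_lt hac
  have haV : a ∈ V := (hV a).mpr (Or.inl rfl)
  have hbV : b ∈ V := (hV b).mpr (Or.inr (Or.inl rfl))
  have hsubV : ∀ x ∈ V', x ∈ V := fun x hx => (hV x).mpr (Or.inr (Or.inr hx))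
  have hcVV : c ∈ V := hsubV c hcV
  have hne_a : ∀ x ∈ V', x ≠ a := fun x hx h => ha' (h ▸ hx)
  have hne_b : ∀ x ∈ V', x ≠ b := fun x hx h => hb' (h ▸ hx)
  have hzV' : z ∈ V' := hP'.sub _ hs₀ z (by simp)
  have hza : z ≠ a := hne_a z hzV'
  have hzb : z ≠ b := hne_b z hzV'
  have hbz : b < z := hlow z hzV'
  have haz : a < z := hab.trans hbz
  have hazne : a ≠ z := ne_of_lt haz
  have hcz : c < z := lt_of_le_of_ne (hcmin z (hsubV z hzV') hbz) (Ne.symm hzc)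
  have hcpair : ∀ t ∈ P', c ∈ t → t = ({c, z} : Finset (Fin n)) :=
    fun t ht hct => same_pair_eq hP'.disj ht hs₀ hct (by simp)
  have hzpair : ∀ t ∈ P', z ∈ t → t = ({c, z} : Finset (Fin n)) :=
    fun t ht hzt => same_pair_eq hP'.disj ht hs₀ hzt (by simp)
  have hmemP : ∀ s : Finset (Fin n),
      s ∈ insert {b, c} (insert {a, z} (P'.erase {c, z})) ↔
        s = {b, c} ∨ s = {a, z} ∨ (s ∈ P' ∧ s ≠ {c, z}) := by
    intro s
    simp only [Finset.mem_insert, Finset.mem_erase]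
    tauto
  have hPM : IsPM V (insert {b, c} (insert {a, z} (P'.erase {c, z}))) := by
    have d1 : Disjoint ({b, c} : Finset (Fin n)) ({a, z} : Finset (Fin n)) := by
      rw [Finset.disjoint_left]
      intro x hx hx2
      rcases Finset.mem_insert.mp hx with h1 | hx
      · rw [h1] at hx2
        rcases Finset.mem_insert.mp hx2 with h | h
        · exact hane h.symm
        · rw [Finset.mem_singleton] at h; exact hzb h.symm
      · rw [Finset.mem_singleton] at hx
        rw [hx] at hx2
        rcases Finset.mem_insert.mp hx2 with h | h
        · exact hacne h.symm
        · rw [Finset.mem_singleton] at h; exact hzc h.symm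
    have d2 : ∀ t ∈ P', t ≠ ({c, z} : Finset (Fin n)) →
        Disjoint ({b, c} : Finset (Fin n)) t := by
      intro t ht htne
      rw [Finset.disjoint_left]
      intro x hx hxt
      rcases Finset.mem_insert.mp hx with h1 | hx
      · rw [h1] at hxt; exact hb' (hP'.sub t ht _ hxt)
      · rw [Finset.mem_singleton] at hx; rw [hx] at hxt; exact htne (hcpair t ht hxt)
    have d3 : ∀ t ∈ P', t ≠ ({c, z} : Finset (Fin n)) →
        Disjoint ({a, z} : Finset (Fin n)) t := by
      intro t ht htne
      rw [Finset.disjoint_left]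
      intro x hx hxt
      rcases Finset.mem_insert.mp hx with h1 | hx
      · rw [h1] at hxt; exact ha' (hP'.sub t ht _ hxt)
      · rw [Finset.mem_singleton] at hx; rw [hx] at hxt; exact htne (hzpair t ht hxt)
    constructor
    · intro s hs
      rcases (hmemP s).mp hs with rfl | rfl | ⟨hs, _⟩
      · exact Finset.card_pair hbcne
      · exact Finset.card_pair hazne
      · exact hP'.card_two s hs
    · intro s hs t ht hst
      rcases (hmemP s).mp hs with rfl | rfl | ⟨hs1, hs2⟩ <;>
        rcases (hmemP t).mp ht with rfl | rfl | ⟨ht1, ht2⟩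
      · exact absurd rfl hst
      · exact d1
      · exact d2 t ht1 ht2
      · exact d1.symm
      · exact absurd rfl hst
      · exact d3 t ht1 ht2
      · exact (d2 s hs1 hs2).symm
      · exact (d3 s hs1 hs2).symm
      · exact hP'.disj s hs1 t ht1 hst
    · intro s hs i hi
      rcases (hmemP s).mp hs with h | h | ⟨hs1, _⟩
      · rw [h] at hi
        rcases Finset.mem_insert.mp hi with h1 | hi
        · rw [h1]; exact hbV
        · rw [Finset.mem_singleton] at hi; rw [hi]; exact hcVV
      · rw [h] at hi
        rcases Finset.mem_insert.mp hi with h1 | hi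
        · rw [h1]; exact haV
        · rw [Finset.mem_singleton] at hi; rw [hi]; exact hsubV z hzV'
      · exact hsubV i (hP'.sub s hs1 i hi)
    · intro s hs i hi j hj hij k hkV hik hkj
      have hmembc : ({b, c} : Finset (Fin n)) ∈
          insert {b, c} (insert {a, z} (P'.erase {c, z})) := Finset.mem_insert_self _ _
      have hmemaz : ({a, z} : Finset (Fin n)) ∈
          insert {b, c} (insert {a, z} (P'.erase {c, z})) :=
        Finset.mem_insert_of_mem (Finset.mem_insert_self _ _)
      rcases (hmemP s).mp hs with h | h | ⟨hsP', hsne⟩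
      · -- s = {b,c}
        have hres := pair_lt_resolve h hbc hi hj hij
        rw [hres.1] at hik
        rw [hres.2] at hkj
        rw [hres.1, hres.2]
        refine ⟨{b, c}, hmembc, ?_, ?_⟩
        · rcases (hV k).mp hkV with hk | hk | hk
          · rw [hk] at hik; exact absurd hik (not_le_of_gt hab)
          · rw [hk]; exact Finset.mem_insert_self _ _
          · have hkc : k = c := le_antisymm hkj (hcmin k (hsubV k hk) (hlow k hk))
            rw [hkc]; exact Finset.mem_insert_of_mem (Finset.mem_singleton_self _)
        · intro l hl
          rcases Finset.mem_insert.mp hl with rfl | hl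
          · exact ⟨le_refl _, hbc.le⟩
          · rw [Finset.mem_singleton] at hl; subst hl; exact ⟨hbc.le, le_refl _⟩
      · -- s = {a,z}
        have hres := pair_lt_resolve h haz hi hj hij
        rw [hres.1] at hik
        rw [hres.2] at hkj
        rw [hres.1, hres.2]
        have hboundsbc : ∀ l ∈ ({b, c} : Finset (Fin n)), a ≤ l ∧ l ≤ z := by
          intro l hl
          rcases Finset.mem_insert.mp hl with rfl | hl
          · exact ⟨hab.le, hbz.le⟩
          · rw [Finset.mem_singleton] at hl; subst hl; exact ⟨hac.le, hcz.le⟩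
        rcases (hV k).mp hkV with hk | hk | hk
        · refine ⟨{a, z}, hmemaz, ?_, ?_⟩
          · rw [hk]; exact Finset.mem_insert_self _ _
          · intro l hl
            rcases Finset.mem_insert.mp hl with rfl | hl
            · exact ⟨le_refl _, haz.le⟩
            · rw [Finset.mem_singleton] at hl; subst hl; exact ⟨haz.le, le_refl _⟩
        · refine ⟨{b, c}, hmembc, ?_, hboundsbc⟩
          rw [hk]; exact Finset.mem_insert_self _ _
        · by_cases hkc : k = c
          · refine ⟨{b, c}, hmembc, ?_, hboundsbc⟩
            rw [hkc]; exact Finset.mem_insert_of_mem (Finset.mem_singleton_self _)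
          · have hck : c < k := lt_of_le_of_ne (hcmin k (hsubV k hk) (hlow k hk)) (Ne.symm hkc)
            obtain ⟨t, htP', hkt, hbd⟩ := hP'.planar {c, z} hs₀ c (by simp) z (by simp)
              hcz k hk hck.le hkj
            by_cases hts₀ : t = ({c, z} : Finset (Fin n))
            · subst hts₀
              have hkz : k = z := by
                rcases Finset.mem_insert.mp hkt with h2 | h2
                · exact absurd h2 hkc
                · rwa [Finset.mem_singleton] at h2
              refine ⟨{a, z}, hmemaz, ?_, ?_⟩
              · rw [hkz]; exact Finset.mem_insert_of_mem (Finset.mem_singleton_self _)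
              · intro l hl
                rcases Finset.mem_insert.mp hl with rfl | hl
                · exact ⟨le_refl _, haz.le⟩
                · rw [Finset.mem_singleton] at hl; subst hl; exact ⟨haz.le, le_refl _⟩
            · refine ⟨t, (hmemP t).mpr (Or.inr (Or.inr ⟨htP', hts₀⟩)), hkt, ?_⟩
              intro l hl
              exact ⟨le_trans hac.le (hbd l hl).1, (hbd l hl).2⟩
      · -- s ∈ P', s ≠ {c,z}
        have hiV' : i ∈ V' := hP'.sub s hsP' i hi
        have hjV' : j ∈ V' := hP'.sub s hsP' j hj
        rcases (hV k).mp hkV with hk | hk | hk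
        · rw [hk] at hik
          exact absurd hik (not_le_of_gt (hab.trans (hlow i hiV')))
        · rw [hk] at hik
          exact absurd hik (not_le_of_gt (hlow i hiV'))
        · obtain ⟨t, htP', hkt, hbd⟩ := hP'.planar s hsP' i hi j hj hij k hk hik hkj
          by_cases hts₀ : t = ({c, z} : Finset (Fin n))
          · exfalso
            have hcbd : i ≤ c ∧ c ≤ j := by
              have := hbd c (by rw [hts₀]; simp)
              exact this
            have hci : c ≤ i := hcmin i (hsubV i hiV') (hlow i hiV')
            have hic : i = c := le_antisymm hcbd.1 hci
            exact hsne (hcpair s hsP' (hic ▸ hi))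
          · exact ⟨t, (hmemP t).mpr (Or.inr (Or.inr ⟨htP', hts₀⟩)), hkt, hbd⟩
  have hpdefQ : pdef V (insert {a, b} Q') = pdef V' Q' := by
    ext x
    rw [mem_pdef, mem_pdef]
    constructor
    · rintro ⟨hxV, hunc⟩
      have hxa : x ≠ a := by rintro rfl; exact hunc _ (Finset.mem_insert_self _ _) (by simp)
      have hxb : x ≠ b := by rintro rfl; exact hunc _ (Finset.mem_insert_self _ _) (by simp)
      rcases (hV x).mp hxV with rfl | rfl | hx
      · exact absurd rfl hxa
      · exact absurd rfl hxb
      · exact ⟨hx, fun s hs => hunc s (Finset.mem_insert_of_mem hs)⟩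
    · rintro ⟨hxV', hunc⟩
      refine ⟨hsubV x hxV', fun s hs => ?_⟩
      rcases Finset.mem_insert.mp hs with rfl | hs
      · simp only [Finset.mem_insert, Finset.mem_singleton]
        push_neg
        exact ⟨hne_a x hxV', hne_b x hxV'⟩
      · exact hunc s hs
  have hpdefP : pdef V (insert {b, c} (insert {a, z} (P'.erase {c, z}))) = pdef V' P' := by
    ext x
    rw [mem_pdef, mem_pdef]
    constructor
    · rintro ⟨hxV, hunc⟩
      have hxb : x ≠ b := by
        rintro rfl
        exact hunc _ (Finset.mem_insert_self _ _) (by simp)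
      have hxc : x ≠ c := by
        rintro rfl
        exact hunc _ (Finset.mem_insert_self _ _) (by simp)
      have hxa : x ≠ a := by
        rintro rfl
        exact hunc _ (Finset.mem_insert_of_mem (Finset.mem_insert_self _ _)) (by simp)
      have hxz : x ≠ z := by
        rintro rfl
        exact hunc _ (Finset.mem_insert_of_mem (Finset.mem_insert_self _ _)) (by simp)
      rcases (hV x).mp hxV with rfl | rfl | hx
      · exact absurd rfl hxa
      · exact absurd rfl hxb
      · refine ⟨hx, fun s hs => ?_⟩
        by_cases hss : s = ({c, z} : Finset (Fin n))
        · subst hss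
          simp only [Finset.mem_insert, Finset.mem_singleton]
          push_neg
          exact ⟨hxc, hxz⟩
        · exact hunc s ((hmemP s).mpr (Or.inr (Or.inr ⟨hs, hss⟩)))
    · rintro ⟨hxV', hunc⟩
      have hxs₀ := hunc _ hs₀
      have hxc : x ≠ c := by rintro rfl; exact hxs₀ (by simp)
      have hxz : x ≠ z := by rintro rfl; exact hxs₀ (by simp)
      refine ⟨hsubV x hxV', fun s hs => ?_⟩
      rcases (hmemP s).mp hs with rfl | rfl | ⟨hs1, _⟩
      · simp only [Finset.mem_insert, Finset.mem_singleton]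
        push_neg
        exact ⟨hne_b x hxV', hxc⟩
      · simp only [Finset.mem_insert, Finset.mem_singleton]
        push_neg
        exact ⟨hne_a x hxV', hxz⟩
      · exact hunc s hs1
  have hcdP : (pdef V (insert {b, c} (insert {a, z} (P'.erase {c, z})))).card =
      (pdef V (insert {a, b} Q')).card := by
    rw [hpdefP, hpdefQ, hcard]
  have hQP : Disjoint (insert {a, b} Q') (insert {b, c} (insert {a, z} (P'.erase {c, z}))) := by
    rw [Finset.disjoint_left]
    intro s hs hsP
    rcases Finset.mem_insert.mp hs with rfl | hs
    · rcases (hmemP _).mp hsP with h | h | ⟨h1, _⟩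
      · have ham : a ∈ ({b, c} : Finset (Fin n)) := h ▸ (by simp)
        simp only [Finset.mem_insert, Finset.mem_singleton] at ham
        rcases ham with h2 | h2
        · exact hane h2
        · exact hacne h2
      · have hbm : b ∈ ({a, z} : Finset (Fin n)) := h ▸ (by simp)
        simp only [Finset.mem_insert, Finset.mem_singleton] at hbm
        rcases hbm with h2 | h2
        · exact hane h2.symm
        · exact hzb h2.symm
      · exact ha' (hP'.sub _ h1 a (by simp))
    · rcases (hmemP _).mp hsP with rfl | rfl | ⟨h1, _⟩
      · exact hb' (hQ'sub _ hs b (by simp))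
      · exact ha' (hQ'sub _ hs a (by simp))
      · exact (Finset.disjoint_left.mp hdisj) hs h1
  have hAdjbc : (pgraph (insert {a, b} Q')
      (insert {b, c} (insert {a, z} (P'.erase {c, z})))).Adj b c :=
    adj_of_pair (Finset.mem_union_right _ (Finset.mem_insert_self _ _)) (by simp) (by simp) hbcne
  have hAdjab : (pgraph (insert {a, b} Q')
      (insert {b, c} (insert {a, z} (P'.erase {c, z})))).Adj a b :=
    adj_of_pair (Finset.mem_union_left _ (Finset.mem_insert_self _ _)) (by simp) (by simp) hane
  have hAdjaz : (pgraph (insert {a, b} Q')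
      (insert {b, c} (insert {a, z} (P'.erase {c, z})))).Adj a z :=
    adj_of_pair (Finset.mem_union_right _
      (Finset.mem_insert_of_mem (Finset.mem_insert_self _ _))) (by simp) (by simp) hazne
  have hlift : ∀ x y, (pgraph Q' P').Adj x y →
      (pgraph (insert {a, b} Q')
        (insert {b, c} (insert {a, z} (P'.erase {c, z})))).Reachable x y := by
    intro x y hxy
    obtain ⟨hne, s, hsU, hx, hy⟩ := pgraph_adj.mp hxy
    rcases Finset.mem_union.mp hsU with hsQ | hsP
    · exact (adj_of_pair (Finset.mem_union_left _ (Finset.mem_insert_of_mem hsQ)) hx hy hne).reachable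
    · by_cases hts₀ : s = ({c, z} : Finset (Fin n))
      · subst hts₀
        have hreach : (pgraph (insert {a, b} Q')
            (insert {b, c} (insert {a, z} (P'.erase {c, z})))).Reachable c z :=
          hAdjbc.symm.reachable.trans (hAdjab.symm.reachable.trans hAdjaz.reachable)
        rcases Finset.mem_insert.mp hx with rfl | hx
        · rcases Finset.mem_insert.mp hy with h2 | h2
          · exact absurd h2.symm hne
          · rw [Finset.mem_singleton] at h2; subst h2; exact hreach
        · rw [Finset.mem_singleton] at hx; subst hx
          rcases Finset.mem_insert.mp hy with h2 | h2
          · subst h2; exact hreach.symm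
          · rw [Finset.mem_singleton] at h2; subst h2; exact absurd rfl hne
      · exact (adj_of_pair (Finset.mem_union_right _
          ((hmemP s).mpr (Or.inr (Or.inr ⟨hsP, hts₀⟩)))) hx hy hne).reachable
  have hmonoR : ∀ {u v : Fin n}, (pgraph Q' P').Reachable u v →
      (pgraph (insert {a, b} Q')
        (insert {b, c} (insert {a, z} (P'.erase {c, z})))).Reachable u v :=
    fun h => reach_of_adj_reach hlift h
  have halfbuild : ∀ (A' A : Pairs n) (φ : Fin n → Fin n),
      pdef V A = pdef V' A' →
      Half V' A' (pgraph Q' P') φ →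
      Half V A (pgraph (insert {a, b} Q') (insert {b, c} (insert {a, z} (P'.erase {c, z}))))
        (fun x => if x = a ∨ x = b then φ c else φ x) := by
    intro A' A φ hpd hφ
    refine ⟨?_, ?_, ?_, ?_⟩
    · intro d hd
      rw [hpd] at hd
      have hdV' := (mem_pdef.mp hd).1
      simp only
      rw [if_neg (by push_neg; exact ⟨hne_a d hdV', hne_b d hdV'⟩)]
      exact hφ.1 d hd
    · intro i hi
      simp only
      rw [hpd]
      rcases (hV i).mp hi with rfl | rfl | hx
      · rw [if_pos (Or.inl rfl)]; exact hφ.2.1 c hcV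
      · rw [if_pos (Or.inr rfl)]; exact hφ.2.1 c hcV
      · rw [if_neg (by push_neg; exact ⟨hne_a i hx, hne_b i hx⟩)]; exact hφ.2.1 i hx
    · intro i j hadj
      obtain ⟨hne, s, hsU, his, hjs⟩ := pgraph_adj.mp hadj
      simp only
      rcases Finset.mem_union.mp hsU with hsQ | hsP
      · rcases Finset.mem_insert.mp hsQ with h | hsQ'
        · have key : ∀ x ∈ s, (if x = a ∨ x = b then φ c else φ x) = φ c := by
            intro x hx
            rw [h] at hx
            rcases Finset.mem_insert.mp hx with h2 | h2
            · rw [h2, if_pos (Or.inl rfl)]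
            · rw [Finset.mem_singleton] at h2; rw [h2, if_pos (Or.inr rfl)]
          rw [key i his, key j hjs]
        · have hiV' := hQ'sub s hsQ' i his
          have hjV' := hQ'sub s hsQ' j hjs
          rw [if_neg (by push_neg; exact ⟨hne_a i hiV', hne_b i hiV'⟩),
            if_neg (by push_neg; exact ⟨hne_a j hjV', hne_b j hjV'⟩)]
          exact hφ.2.2.1 i j (adj_of_pair (Finset.mem_union_left _ hsQ') his hjs hne)
      · rcases (hmemP s).mp hsP with h | h | ⟨hsP', hts₀⟩
        · have key : ∀ x ∈ s, (if x = a ∨ x = b then φ c else φ x) = φ c := by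
            intro x hx
            rw [h] at hx
            rcases Finset.mem_insert.mp hx with h2 | h2
            · rw [h2, if_pos (Or.inr rfl)]
            · rw [Finset.mem_singleton] at h2
              rw [h2, if_neg (by push_neg; exact ⟨hacne.symm, hbcne.symm⟩)]
          rw [key i his, key j hjs]
        · have hφzc : φ z = φ c := hφ.2.2.1 z c
            (adj_of_pair (Finset.mem_union_right _ hs₀) (by simp) (by simp) hzc)
          have key : ∀ x ∈ s, (if x = a ∨ x = b then φ c else φ x) = φ c := by
            intro x hx
            rw [h] at hx
            rcases Finset.mem_insert.mp hx with h2 | h2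
            · rw [h2, if_pos (Or.inl rfl)]
            · rw [Finset.mem_singleton] at h2
              rw [h2, if_neg (by push_neg; exact ⟨hza, hzb⟩)]
              exact hφzc
          rw [key i his, key j hjs]
        · have hiV' := hP'.sub s hsP' i his
          have hjV' := hP'.sub s hsP' j hjs
          rw [if_neg (by push_neg; exact ⟨hne_a i hiV', hne_b i hiV'⟩),
            if_neg (by push_neg; exact ⟨hne_a j hjV', hne_b j hjV'⟩)]
          exact hφ.2.2.1 i j (adj_of_pair (Finset.mem_union_right _ hsP') his hjs hne)
    · intro i hi
      simp only
      rcases (hV i).mp hi with rfl | rfl | hx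
      · rw [if_pos (Or.inl rfl)]
        exact hAdjab.reachable.trans
          (hAdjbc.reachable.trans (hmonoR (hφ.2.2.2 c hcV)))
      · rw [if_pos (Or.inr rfl)]
        exact hAdjbc.reachable.trans (hmonoR (hφ.2.2.2 c hcV))
      · rw [if_neg (by push_neg; exact ⟨hne_a i hx, hne_b i hx⟩)]
        exact hmonoR (hφ.2.2.2 i hx)
  refine ⟨hPM, hcdP, hQP, ?_, ?_⟩
  · exact ⟨fun x => if x = a ∨ x = b then f' c else f' x, halfbuild Q' _ f' hpdefQ hf'⟩
  · exact ⟨fun x => if x = a ∨ x = b then g' c else g' x, halfbuild P' _ g' hpdefP hg'⟩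


theorem core : ∀ (N : ℕ) (V : Finset (Fin n)) (Q : Pairs n), IsPM V Q → Q.card = N →
    (pdef V Q).Nonempty → ∃ P : Pairs n, Good V Q P := by
  intro N
  induction N with
  | zero =>
    intro V Q hQ hcard hne
    have hQempty : Q = ∅ := Finset.card_eq_zero.mp hcard
    subst hQempty
    have hPM : IsPM V (∅ : Pairs n) :=
      ⟨fun s hs => absurd hs (Finset.notMem_empty s),
       fun s hs => absurd hs (Finset.notMem_empty s),
       fun s hs => absurd hs (Finset.notMem_empty s),
       fun s hs => absurd hs (Finset.notMem_empty s)⟩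
    have hpd : pdef V (∅ : Pairs n) = V := by
      ext x
      rw [mem_pdef]
      simp
    have hhalf : Half V (∅ : Pairs n) (pgraph (∅ : Pairs n) (∅ : Pairs n)) id := by
      refine ⟨fun d _ => rfl, fun i hi => ?_, fun i j hadj => ?_, fun i _ => ?_⟩
      · rw [hpd]; exact hi
      · obtain ⟨_, s, hs, _, _⟩ := pgraph_adj.mp hadj
        simp at hs
      · exact SimpleGraph.Reachable.refl i
    exact ⟨∅, hPM, rfl, Finset.disjoint_empty_right _, ⟨id, hhalf⟩, ⟨id, hhalf⟩⟩
  | succ N ih =>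
    intro V Q hQ hcard hne
    have hQne : Q.Nonempty := by rw [← Finset.card_pos, hcard]; omega
    obtain ⟨a, b, hab, hsQ, hgap⟩ := exists_gap_pair hQ hQne
    set V' := (V.erase a).erase b with hV'def
    have hmemV' : ∀ x, x ∈ V' ↔ x ∈ V ∧ x ≠ a ∧ x ≠ b := by
      intro x
      rw [hV'def]
      simp only [Finset.mem_erase]
      tauto
    have haV : a ∈ V := hQ.sub _ hsQ a (by simp)
    have hbV : b ∈ V := hQ.sub _ hsQ b (by simp)
    have ha' : a ∉ V' := fun h => ((hmemV' a).mp h).2.1 rfl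
    have hb' : b ∉ V' := fun h => ((hmemV' b).mp h).2.2 rfl
    have hV : ∀ x, x ∈ V ↔ x = a ∨ x = b ∨ x ∈ V' := by
      intro x
      constructor
      · intro hx
        by_cases h1 : x = a
        · exact Or.inl h1
        · by_cases h2 : x = b
          · exact Or.inr (Or.inl h2)
          · exact Or.inr (Or.inr ((hmemV' x).mpr ⟨hx, h1, h2⟩))
      · rintro (rfl | rfl | hx)
        · exact haV
        · exact hbV
        · exact ((hmemV' x).mp hx).1
    set Q' := Q.erase {a, b} with hQ'def
    have hQ'PM : IsPM V' Q' := restrict_IsPM hQ hsQ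
    have hpdQ : pdef V Q = pdef V' Q' := pdef_erase_eq hsQ
    have hQ'card : Q'.card = N := by
      rw [hQ'def, Finset.card_erase_of_mem hsQ, hcard]
      omega
    have hne' : (pdef V' Q').Nonempty := hpdQ ▸ hne
    obtain ⟨P', hGood⟩ := ih V' Q' hQ'PM hQ'card hne'
    obtain ⟨hP'PM, hcard', hdisj', ⟨f', hf'⟩, ⟨g', hg'⟩⟩ := hGood
    have hQins : insert ({a, b} : Finset (Fin n)) Q' = Q := Finset.insert_erase hsQ
    by_cases hleft : ∃ x ∈ V', x < a
    · have hfil : (V'.filter (fun x => x < a)).Nonempty := by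
        obtain ⟨x, hx1, hx2⟩ := hleft
        exact ⟨x, Finset.mem_filter.mpr ⟨hx1, hx2⟩⟩
      set c := (V'.filter (fun x => x < a)).max' hfil with hcdef
      have hcmem := (V'.filter (fun x => x < a)).max'_mem hfil
      have hcV : c ∈ V' := (Finset.mem_filter.mp hcmem).1
      have hca : c < a := (Finset.mem_filter.mp hcmem).2
      have hcmax : ∀ x ∈ V, x < a → x ≤ c := by
        intro x hx hxa
        rcases (hV x).mp hx with h | h | hx'
        · exact absurd (h ▸ hxa) (lt_irrefl a)
        · exact absurd (h ▸ hxa) (not_lt_of_gt hab)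
        · rw [hcdef]
          exact Finset.le_max' (V'.filter (fun x => x < a)) x (Finset.mem_filter.mpr ⟨hx', hxa⟩)
      by_cases hcpaired : ∃ s ∈ P', c ∈ s
      · obtain ⟨s₀, hs₀P, hcs₀⟩ := hcpaired
        obtain ⟨z, hzc, hs₀eq⟩ := mem_pair_other (hP'PM.card_two _ hs₀P) hcs₀
        rw [hs₀eq] at hs₀P
        have hgood2 := splice_L_paired V V' Q' P' a b c z hab hca hV ha' hb' hcV hgap hcmax
          hP'PM hQ'PM.sub hdisj' hcard' hzc hs₀P f' g' hf' hg'
        rw [hQins] at hgood2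
        exact ⟨_, hgood2⟩
      · have hcdef2 : c ∈ pdef V' P' :=
          mem_pdef.mpr ⟨hcV, fun s hs hcs => hcpaired ⟨s, hs, hcs⟩⟩
        have hgood2 := splice_L_defect V V' Q' P' a b c hab hca hV ha' hb' hcV hgap hcmax
          hP'PM hQ'PM.sub hdisj' hcard' hcdef2 f' g' hf' hg'
        rw [hQins] at hgood2
        exact ⟨_, hgood2⟩
    · have hlow : ∀ x ∈ V', b < x := by
        intro x hx
        push_neg at hleft
        have h1 : a ≤ x := hleft x hx
        have h2 : x ≠ a := fun h => ha' (h ▸ hx)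
        have h3 : a < x := lt_of_le_of_ne h1 (Ne.symm h2)
        rcases lt_trichotomy x b with h4 | h4 | h4
        · exact absurd ⟨h3, h4⟩ (hgap x ((hV x).mpr (Or.inr (Or.inr hx))))
        · exact absurd h4 (fun hh => hb' (hh ▸ hx))
        · exact h4
      have hV'ne : V'.Nonempty := by
        obtain ⟨d, hd⟩ := hne
        obtain ⟨hdV, hdunc⟩ := mem_pdef.mp hd
        have hda : d ≠ a := by rintro rfl; exact hdunc _ hsQ (by simp)
        have hdb : d ≠ b := by rintro rfl; exact hdunc _ hsQ (by simp)
        exact ⟨d, (hmemV' d).mpr ⟨hdV, hda, hdb⟩⟩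
      have hfil : (V'.filter (fun x => b < x)).Nonempty := by
        obtain ⟨x, hx⟩ := hV'ne
        exact ⟨x, Finset.mem_filter.mpr ⟨hx, hlow x hx⟩⟩
      set c := (V'.filter (fun x => b < x)).min' hfil with hcdef
      have hcmem := (V'.filter (fun x => b < x)).min'_mem hfil
      have hcV : c ∈ V' := (Finset.mem_filter.mp hcmem).1
      have hbc : b < c := (Finset.mem_filter.mp hcmem).2
      have hcmin : ∀ x ∈ V, b < x → c ≤ x := by
        intro x hx hbx
        rcases (hV x).mp hx with h | h | hx'
        · exact absurd (h ▸ hbx) (not_lt_of_gt hab)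
        · exact absurd (h ▸ hbx) (lt_irrefl b)
        · rw [hcdef]
          exact Finset.min'_le (V'.filter (fun x => b < x)) x (Finset.mem_filter.mpr ⟨hx', hbx⟩)
      by_cases hcpaired : ∃ s ∈ P', c ∈ s
      · obtain ⟨s₀, hs₀P, hcs₀⟩ := hcpaired
        obtain ⟨z, hzc, hs₀eq⟩ := mem_pair_other (hP'PM.card_two _ hs₀P) hcs₀
        rw [hs₀eq] at hs₀P
        have hgood2 := splice_R_paired V V' Q' P' a b c z hab hbc hV ha' hb' hcV hcmin hlow
          hP'PM hQ'PM.sub hdisj' hcard' hzc hs₀P f' g' hf' hg'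
        rw [hQins] at hgood2
        exact ⟨_, hgood2⟩
      · have hcdef2 : c ∈ pdef V' P' :=
          mem_pdef.mpr ⟨hcV, fun s hs hcs => hcpaired ⟨s, hs, hcs⟩⟩
        have hgood2 := splice_R_defect V V' Q' P' a b c hab hbc hV ha' hb' hcV hcmin hlow
          hP'PM hQ'PM.sub hdisj' hcard' hcdef2 f' g' hf' hg'
        rw [hQins] at hgood2
        exact ⟨_, hgood2⟩

end Stmt10Aux

/-- For any planar link state `q` with `t ≥ 1` defects there is a planar link state `p`
with `t` defects such that the pair graph (edges: the connections of `q` together with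
those of `p`) is acyclic as a multigraph, and every connected component contains exactly
one defect of `q` and exactly one defect of `p`. -/
theorem stmt_10 {n : ℕ} (q : LinkState n) (t : ℕ) (ht : q.defects.card = t)
    (htpos : 1 ≤ t) :
    ∃ p : LinkState n, p.defects.card = t ∧
      Disjoint q.pairs p.pairs ∧
      (SimpleGraph.fromRel
        (fun i j => ∃ s ∈ q.pairs ∪ p.pairs, i ∈ s ∧ j ∈ s)).IsAcyclic ∧
      (∀ i : Fin n, ∃! d : Fin n, d ∈ q.defects ∧
        (SimpleGraph.fromRel
          (fun i j => ∃ s ∈ q.pairs ∪ p.pairs, i ∈ s ∧ j ∈ s)).Reachable i d) ∧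
      (∀ i : Fin n, ∃! d : Fin n, d ∈ p.defects ∧
        (SimpleGraph.fromRel
          (fun i j => ∃ s ∈ q.pairs ∪ p.pairs, i ∈ s ∧ j ∈ s)).Reachable i d) := by
  classical
  open Stmt10Aux in
  have hQPM : IsPM (Finset.univ : Finset (Fin n)) q.pairs :=
    ⟨q.card_two, q.disj, fun s _ i _ => Finset.mem_univ i,
     fun s hs i hi j hj hij k _ hik hkj => q.planar s hs i hi j hj hij k hik hkj⟩
  have hdefq : q.defects = Stmt10Aux.pdef Finset.univ q.pairs := rfl
  have hne : (Stmt10Aux.pdef Finset.univ q.pairs).Nonempty := by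
    rw [← hdefq, ← Finset.card_pos, ht]
    omega
  obtain ⟨P, hGood⟩ := Stmt10Aux.core q.pairs.card Finset.univ q.pairs hQPM rfl hne
  obtain ⟨hPPM, hcards, hdisj, ⟨f, hf⟩, ⟨g, hg⟩⟩ := hGood
  refine ⟨⟨P, hPPM.card_two, hPPM.disj,
    fun s hs i hi j hj hij k hik hkj =>
      hPPM.planar s hs i hi j hj hij k (Finset.mem_univ k) hik hkj⟩, ?_, hdisj, ?_, ?_, ?_⟩
  · show (Stmt10Aux.pdef Finset.univ P).card = t
    rw [hcards, ← hdefq, ht]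
  · exact Stmt10Aux.acyclic_of_half q.card_two q.disj (fun s _ i _ => Finset.mem_univ i)
      hPPM.card_two hPPM.disj hPPM.sub hf
  · intro i
    refine ⟨f i, ⟨?_, ?_⟩, ?_⟩
    · rw [hdefq]; exact hf.2.1 i (Finset.mem_univ i)
    · exact hf.2.2.2 i (Finset.mem_univ i)
    · rintro d ⟨hd1, hd2⟩
      have h1 : f i = f d := Stmt10Aux.const_of_reach hf.2.2.1 hd2
      have h2 : f d = d := hf.1 d (hdefq ▸ hd1)
      exact (h1.trans h2).symm
  · intro i
    refine ⟨g i, ⟨?_, ?_⟩, ?_⟩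
    · exact hg.2.1 i (Finset.mem_univ i)
    · exact hg.2.2.2 i (Finset.mem_univ i)
    · rintro d ⟨hd1, hd2⟩
      have h1 : g i = g d := Stmt10Aux.const_of_reach hg.2.2.1 hd2
      have h2 : g d = d := hg.1 d hd1
      exact (h1.trans h2).symm
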